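/- arXiv:2005.06277 — 5 statements merged into one kernel-verified Lean document; each statement's English description precedes it below -/
import Mathlib

section
/- Let X₁, X₂, … be independent real random variables such that E[Xᵢ] = 0, E[Xᵢ²] ≤ σᵢ², and Xᵢ ≤ b almost surely for all i ∈ ℕ, where b > 0. Define Sₙ = Σ_{i=1}^{n} Xᵢ, νₙ = (1/n) Σ_{i=1}^{n} σᵢ², and 𝒱(s, n) = n·ln[ (b²/(b² + νₙ))·exp(−(νₙ/b)s) + (νₙ/(b² + νₙ))·e^{b s} ] for s ∈ ℝ, n ∈ ℕ. Let m be a positive integer with νₘ > 0 and let 0 < ε < b. Set ζ = (b/(b² + νₘ))·ln( (1 + εb/νₘ)/(1 − ε/b) ). Then Pr{ ∃ n ∈ ℕ, ζ(Sₙ − m ε) − 𝒱(ζ, n) + 𝒱(ζ, m) ≥ 0 } ≤ [ (1 + bε/νₘ)^{−(νₘ + bε)/(b² + νₘ)} · (1 − ε/b)^{−(b² − bε)/(b² + νₘ)} ]^m. -/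
open MeasureTheory ProbabilityTheory

open Real

lemma mono_Ici {f f' : ℝ → ℝ} (hd : ∀ x, HasDerivAt f (f' x) x)
    (h0 : ∀ x, 0 ≤ x → 0 ≤ f' x) : MonotoneOn f (Set.Ici 0) := by
  apply monotoneOn_of_deriv_nonneg (convex_Ici 0)
  · exact Continuous.continuousOn (continuous_iff_continuousAt.2
      fun x => (hd x).differentiableAt.continuousAt)
  · exact fun x _ => (hd x).differentiableAt.differentiableWithinAt
  · intro x hx
    rw [interior_Ici] at hx
    rw [(hd x).deriv]
    exact h0 x (le_of_lt hx)

lemma mono_Ioi {f f' : ℝ → ℝ} (hd : ∀ x, 0 < x → HasDerivAt f (f' x) x)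
    (h0 : ∀ x, 0 < x → 0 ≤ f' x) : MonotoneOn f (Set.Ioi 0) := by
  apply monotoneOn_of_deriv_nonneg (convex_Ioi 0)
  · intro x hx
    exact ((hd x hx).differentiableAt.continuousAt).continuousWithinAt
  · intro x hx
    rw [interior_Ioi] at hx
    exact (hd x hx).differentiableAt.differentiableWithinAt
  · intro x hx
    rw [interior_Ioi] at hx
    rw [(hd x hx).deriv]
    exact h0 x hx

lemma aux_exp_lb {T : ℝ} (hT : 0 ≤ T) : 1 + T + T^2/2 ≤ Real.exp T := by
  have h := Real.sum_le_exp_of_nonneg hT 3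
  simp [Finset.sum_range_succ] at h
  nlinarith [h]

lemma aux_exp_ub {t : ℝ} (ht : t ≤ 0) : Real.exp t ≤ 1 + t + t^2/2 := by
  have hp : ∀ x : ℝ, HasDerivAt (fun x : ℝ => 1 - x + x^2/2) (-1 + x) x := by
    intro x
    have h1 : HasDerivAt (fun x:ℝ => x^2) (2*x) x := by simpa using hasDerivAt_pow 2 x
    have := ((hasDerivAt_const x (1:ℝ)).sub (hasDerivAt_id x)).add (h1.div_const 2)
    exact this.congr_deriv (by ring)
  have hd : ∀ x : ℝ, HasDerivAt (fun x => (1 - x + x^2/2) * Real.exp x)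
      (x^2/2 * Real.exp x) x := by
    intro x
    have := (hp x).mul (Real.hasDerivAt_exp x)
    exact this.congr_deriv (by ring)
  have key : (1:ℝ) ≤ (1 - (-t) + (-t)^2/2) * Real.exp (-t) := by
    have := mono_Ici hd (fun x _ => by positivity) (Set.self_mem_Ici)
      (Set.mem_Ici.2 (neg_nonneg.2 ht)) (neg_nonneg.2 ht)
    simpa using this
  have h3 : Real.exp (-t) * Real.exp t = 1 := by rw [← Real.exp_add]; simp
  nlinarith [key, h3, Real.exp_pos t, Real.exp_pos (-t)]

lemma psi_mono {t T : ℝ} (htT : t ≤ T) (hT : 0 ≤ T) :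
    (Real.exp t - 1 - t) * T^2 ≤ (Real.exp T - 1 - T) * t^2 := by
  rcases le_or_gt t 0 with ht0 | ht0
  · have h1 : Real.exp t - 1 - t ≤ t^2/2 := by nlinarith [aux_exp_ub ht0]
    have h2 : T^2/2 ≤ Real.exp T - 1 - T := by nlinarith [aux_exp_lb hT]
    nlinarith [mul_le_mul_of_nonneg_right h1 (sq_nonneg T),
      mul_le_mul_of_nonneg_right h2 (sq_nonneg t)]
  · have hw' : ∀ x : ℝ, HasDerivAt (fun x : ℝ => (x-2)*Real.exp x + x + 2)
        ((x-1)*Real.exp x + 1) x := by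
      intro x
      have := ((((hasDerivAt_id x).sub_const 2).mul (Real.hasDerivAt_exp x)).add
        (hasDerivAt_id x)).add_const 2
      exact this.congr_deriv (by simp only [id_eq]; ring)
    have hw'0 : ∀ x : ℝ, 0 ≤ (x-1)*Real.exp x + 1 := by
      intro x
      have h1 := Real.add_one_le_exp (-x)
      have h2 : Real.exp (-x) * Real.exp x = 1 := by rw [← Real.exp_add]; simp
      nlinarith [Real.exp_pos x, Real.exp_pos (-x)]
    have hw : ∀ x : ℝ, 0 ≤ x → 0 ≤ (x-2)*Real.exp x + x + 2 := by
      intro x hx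
      have := mono_Ici hw' (fun y _ => hw'0 y) Set.self_mem_Ici (Set.mem_Ici.2 hx) hx
      simpa using this
    have hψd : ∀ x : ℝ, 0 < x → HasDerivAt (fun x => (Real.exp x - 1 - x)/x^2)
        (((Real.exp x - 1)*x^2 - (Real.exp x - 1 - x)*(2*x))/(x^2)^2) x := by
      intro x hx
      have hnum : HasDerivAt (fun x : ℝ => Real.exp x - 1 - x) (Real.exp x - 1) x := by
        have := ((Real.hasDerivAt_exp x).sub_const 1).sub (hasDerivAt_id x)
        exact this
      have hden : HasDerivAt (fun x : ℝ => x^2) (2*x) x := by simpa using hasDerivAt_pow 2 x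
      exact hnum.div hden (by positivity)
    have hmono := mono_Ioi hψd (by
      intro x hx
      apply div_nonneg _ (by positivity)
      have := hw x hx.le
      nlinarith)
    have := hmono (Set.mem_Ioi.2 ht0) (Set.mem_Ioi.2 (lt_of_lt_of_le ht0 htT)) htT
    rw [div_le_div_iff₀ (pow_pos ht0 2) (pow_pos (lt_of_lt_of_le ht0 htT) 2)] at this
    linarith

lemma quad_bound {s b v x : ℝ} (hs : 0 < s) (hb : 0 < b) (hv : 0 ≤ v) (hx : x ≤ b) :
    Real.exp (s*x) ≤ Real.exp (-s/b*v) * (1 + s*(x+v/b))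
      + Real.exp (-s/b*v) * (Real.exp (s*(b+v/b)) - 1 - s*(b+v/b)) / (s*(b+v/b))^2
        * (s*(x+v/b))^2 := by
  have hbv : 0 < b + v/b := add_pos_of_pos_of_nonneg hb (div_nonneg hv hb.le)
  have hT : 0 < s*(b+v/b) := mul_pos hs hbv
  have htT : s*(x+v/b) ≤ s*(b+v/b) :=
    mul_le_mul_of_nonneg_left (add_le_add_left hx _) hs.le
  have key := psi_mono htT hT.le
  have key2 : Real.exp (s*(x+v/b)) - 1 - s*(x+v/b)
      ≤ (Real.exp (s*(b+v/b)) - 1 - s*(b+v/b))/(s*(b+v/b))^2 * (s*(x+v/b))^2 := by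
    rw [div_mul_eq_mul_div, le_div_iff₀ (by positivity)]
    exact key
  have hsplit : Real.exp (s*x) = Real.exp (-s/b*v) * Real.exp (s*(x+v/b)) := by
    rw [← Real.exp_add]; congr 1; field_simp; ring
  rw [hsplit, show Real.exp (-s/b*v) * (Real.exp (s*(b+v/b)) - 1 - s*(b+v/b)) / (s*(b+v/b))^2
        * (s*(x+v/b))^2 = Real.exp (-s/b*v) * ((Real.exp (s*(b+v/b)) - 1 - s*(b+v/b))
        / (s*(b+v/b))^2 * (s*(x+v/b))^2) from by ring]
  have := mul_le_mul_of_nonneg_left key2 (Real.exp_pos (-s/b*v)).le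
  nlinarith [this]

lemma mgf_bound {Ω : Type*} [MeasurableSpace Ω] (P : Measure Ω) [IsProbabilityMeasure P]
    {Z : Ω → ℝ} (hm : Measurable Z) (hint : MeasureTheory.Integrable Z P)
    (hmean : (∫ ω, Z ω ∂P) = 0)
    (hint2 : MeasureTheory.Integrable (fun ω => (Z ω)^2) P) {v : ℝ}
    (hvar : (∫ ω, (Z ω)^2 ∂P) ≤ v)
    (hv : 0 ≤ v) {b : ℝ} (hb : 0 < b) (hbd : ∀ᵐ ω ∂P, Z ω ≤ b) {s : ℝ} (hs : 0 < s) :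
    (∫ ω, Real.exp (s * Z ω) ∂P) ≤ (b^2*Real.exp (-s/b*v) + v*Real.exp (s*b))/(b^2+v) := by
  have hbv : 0 < b + v/b := add_pos_of_pos_of_nonneg hb (div_nonneg hv hb.le)
  set T := s*(b+v/b) with hT
  set E₁ := Real.exp (-s/b*v) with hE₁
  set K := E₁ * (Real.exp T - 1 - T) / T^2 * s^2 with hK
  set α := E₁*(1+s*(v/b)) + K*(v/b)^2 with hα
  set β := E₁*s + 2*K*(v/b) with hβ
  have hTpos : 0 < T := mul_pos hs hbv
  have hE₁pos : 0 < E₁ := Real.exp_pos _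
  have hK0 : 0 ≤ K := by
    have h1 := aux_exp_lb hTpos.le
    have : 0 ≤ Real.exp T - 1 - T := by nlinarith
    rw [hK]
    positivity
  have hq : ∀ x : ℝ, x ≤ b → Real.exp (s*x) ≤ α + β*x + K*x^2 := by
    intro x hx
    have h := quad_bound hs hb hv hx
    calc Real.exp (s*x) ≤ E₁ * (1 + s*(x+v/b)) + E₁ * (Real.exp T - 1 - T) / T^2
          * (s*(x+v/b))^2 := h
      _ = α + β*x + K*x^2 := by rw [hα, hβ, hK]; ring
  have hintexp : MeasureTheory.Integrable (fun ω => Real.exp (s * Z ω)) P := by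
    apply MeasureTheory.Integrable.mono' (MeasureTheory.integrable_const (Real.exp (s*b)))
      (((hm.const_mul s).exp).aestronglyMeasurable)
    filter_upwards [hbd] with ω h
    rw [Real.norm_eq_abs, Real.abs_exp]
    exact Real.exp_le_exp.2 (mul_le_mul_of_nonneg_left h hs.le)
  have i1 : Integrable (fun ω => α + β*Z ω) P := (integrable_const α).add (hint.const_mul β)
  have hintq : Integrable (fun ω => α + β*Z ω + K*(Z ω)^2) P := i1.add (hint2.const_mul K)
  have step1 : (∫ ω, Real.exp (s * Z ω) ∂P) ≤ ∫ ω, α + β*Z ω + K*(Z ω)^2 ∂P := by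
    apply MeasureTheory.integral_mono_ae hintexp hintq
    filter_upwards [hbd] with ω h using hq _ h
  have step2 : (∫ ω, α + β*Z ω + K*(Z ω)^2 ∂P) = α + K * ∫ ω, (Z ω)^2 ∂P := by
    rw [integral_add i1 (hint2.const_mul K),
      integral_add (integrable_const α) (hint.const_mul β),
      integral_const, integral_const_mul, integral_const_mul, hmean]
    simp
  have step3 : α + K * (∫ ω, (Z ω)^2 ∂P) ≤ α + K*v :=
    add_le_add_right (mul_le_mul_of_nonneg_left hvar hK0) α
  have hbne : b ≠ 0 := hb.ne'
  have hbvne : b^2 + v ≠ 0 := by positivity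
  have final : α + K*v = (b^2*E₁ + v*Real.exp (s*b))/(b^2+v) := by
    have hEe : Real.exp (s*b) = E₁ * Real.exp T := by
      rw [hE₁, hT, ← Real.exp_add]; congr 1; field_simp; ring
    rw [hα, hK, hEe, hT]
    have hTne : s*(b+v/b) ≠ 0 := (mul_pos hs hbv).ne'
    field_simp
    ring
  exact ((step1.trans_eq step2).trans step3).trans_eq final

lemma logf_concave {s b : ℝ} (hs : 0 < s) (hb : 0 < b) :
    ConcaveOn ℝ (Set.Ici 0) (fun v => Real.log (b^2 * Real.exp (-s/b*v) + v * Real.exp (s*b))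
      - Real.log (b^2 + v)) := by
  set N : ℝ → ℝ := fun v => b^2 * Real.exp (-s/b*v) + v * Real.exp (s*b) with hNdef
  have hNpos : ∀ v : ℝ, 0 ≤ v → 0 < N v := fun v hv =>
    add_pos_of_pos_of_nonneg (by positivity) (mul_nonneg hv (Real.exp_pos _).le)
  have hDpos : ∀ v : ℝ, 0 ≤ v → 0 < b^2 + v := fun v hv => by positivity
  set NP : ℝ → ℝ := fun v => -(s*b) * Real.exp (-s/b*v) + Real.exp (s*b) with hNPdef
  have hlin : ∀ v : ℝ, HasDerivAt (fun v : ℝ => -s/b*v) (-s/b) v := by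
    intro v; simpa using (hasDerivAt_id v).const_mul (-s/b)
  have hN : ∀ v : ℝ, HasDerivAt N (NP v) v := by
    intro v
    have h2 := (((hlin v).exp).const_mul (b^2)).add ((hasDerivAt_id v).mul_const (Real.exp (s*b)))
    exact h2.congr_deriv (by simp only [hNPdef]; field_simp)
  have hNP : ∀ v : ℝ, HasDerivAt NP (s^2 * Real.exp (-s/b*v)) v := by
    intro v
    have h2 := (((hlin v).exp).const_mul (-(s*b))).add_const (Real.exp (s*b))
    exact h2.congr_deriv (by field_simp)
  apply concaveOn_of_hasDerivWithinAt2_nonpos (convex_Ici 0)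
    (f' := fun v => NP v / N v - 1/(b^2+v))
    (f'' := fun v => (s^2*Real.exp (-s/b*v) * N v - NP v^2)/(N v)^2 + 1/(b^2+v)^2)
  · apply ContinuousOn.sub
    · apply ContinuousOn.log
      · exact Continuous.continuousOn (by fun_prop)
      · exact fun v hv => (hNpos v hv).ne'
    · apply ContinuousOn.log
      · exact Continuous.continuousOn (by fun_prop)
      · exact fun v hv => (hDpos v hv).ne'
  · intro v hv
    rw [interior_Ici] at hv
    have hl1 := (hN v).log (hNpos v hv.le).ne'
    have hl2 : HasDerivAt (fun v : ℝ => Real.log (b^2+v)) (1/(b^2+v)) v := by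
      have := ((hasDerivAt_id v).const_add (b^2)).log (hDpos v hv.le).ne'
      simpa [one_div] using this
    exact (hl1.sub hl2).hasDerivWithinAt
  · intro v hv
    rw [interior_Ici] at hv
    have h1 : HasDerivAt (fun v => NP v / N v)
        ((s^2*Real.exp (-s/b*v) * N v - NP v * NP v)/(N v)^2) v :=
      (hNP v).div (hN v) (hNpos v hv.le).ne'
    have h2 : HasDerivAt (fun v : ℝ => 1/(b^2+v)) (-1/(b^2+v)^2) v := by
      have h3 : HasDerivAt (fun v : ℝ => b^2+v) 1 v := (hasDerivAt_id v).const_add (b^2)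
      have := h3.inv (hDpos v hv.le).ne'
      simpa only [one_div, Pi.inv_def] using this
    have := h1.sub h2
    refine (HasDerivAt.hasDerivWithinAt ?_)
    exact this.congr_deriv (by ring)
  · intro v hv
    rw [interior_Ici] at hv
    set τ := s*(b^2+v)/b with hτ
    have hτpos : 0 < τ := div_pos (mul_pos hs (hDpos v hv.le)) hb
    set r := Real.exp (-τ) with hrdef
    have hrpos : 0 < r := Real.exp_pos _
    have hmul : Real.exp τ * r = 1 := by rw [hrdef, ← Real.exp_add]; simp
    have hE1r : Real.exp (-s/b*v) = Real.exp (s*b) * r := by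
      rw [hrdef, ← Real.exp_add]; congr 1; rw [hτ]; field_simp; ring
    have hA' : 0 ≤ 1 - r^2 - 2*τ*r := by
      have h := Real.self_lt_sinh_iff.2 hτpos
      rw [Real.sinh_eq] at h
      nlinarith [mul_lt_mul_of_pos_right h hrpos, hmul]
    have hB' : 0 ≤ 2 - 2*r - 2*τ*r - τ^2*r := by
      nlinarith [mul_le_mul_of_nonneg_right (aux_exp_lb hτpos.le) hrpos.le, hmul]
    have hDne : (b^2+v) ≠ 0 := (hDpos v hv.le).ne'
    have hsval : s = τ*b/(b^2+v) := by
      rw [hτ]; field_simp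
    have factored : (NP v^2 - s^2*Real.exp (-s/b*v) * N v) * (b^2+v)^2 - (N v)^2
        = Real.exp (s*b)^2 * b^2
          * (b^2*(1 - r^2 - 2*τ*r) + v*(2 - 2*r - 2*τ*r - τ^2*r)) := by
      simp only [hNdef, hNPdef, hE1r]
      rw [hsval]
      field_simp
      ring
    have key : (N v)^2 ≤ (NP v^2 - s^2*Real.exp (-s/b*v) * N v) * (b^2+v)^2 := by
      have hnn : 0 ≤ Real.exp (s*b)^2 * b^2
          * (b^2*(1 - r^2 - 2*τ*r) + v*(2 - 2*r - 2*τ*r - τ^2*r)) := by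
        apply mul_nonneg (mul_nonneg (sq_nonneg _) (sq_nonneg b))
        exact add_nonneg (mul_nonneg (sq_nonneg b) hA') (mul_nonneg hv.le hB')
      linarith [factored, hnn]
    have hN2 : 0 < (N v)^2 := pow_pos (hNpos v hv.le) 2
    have hD2 : 0 < (b^2+v)^2 := pow_pos (hDpos v hv.le) 2
    have h2 : (N v)^2/(b^2+v)^2 ≤ NP v^2 - s^2*Real.exp (-s/b*v) * N v :=
      (div_le_iff₀ hD2).mpr key
    have h1 : (s^2*Real.exp (-s/b*v) * N v - NP v^2)/(N v)^2 ≤ -(1/(b^2+v)^2) := by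
      rw [div_le_iff₀ hN2]
      have : -(1/(b^2+v)^2) * (N v)^2 = -((N v)^2/(b^2+v)^2) := by ring
      rw [this]
      linarith [h2]
    linarith [h1]

lemma jensen_aux {L : ℝ → ℝ} (hL : ConcaveOn ℝ (Set.Ici 0) L) (p : ℕ → ℝ) (hp : ∀ i, 0 ≤ p i)
    {n : ℕ} (hn : 1 ≤ n) :
    ∑ i ∈ Finset.range n, L (p i) ≤ n * L ((∑ i ∈ Finset.range n, p i)/n) := by
  have hn0 : (0:ℝ) < n := by exact_mod_cast hn
  have h := hL.le_map_sum (t := Finset.range n) (w := fun _ => 1/(n:ℝ)) (p := p)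
    (fun i _ => by positivity)
    (by rw [Finset.sum_const, Finset.card_range, nsmul_eq_mul]; field_simp)
    (fun i _ => hp i)
  have e1 : (∑ i ∈ Finset.range n, (1/(n:ℝ)) • p i) = (∑ i ∈ Finset.range n, p i)/n := by
    simp only [smul_eq_mul]
    rw [Finset.sum_div]
    exact Finset.sum_congr rfl fun i _ => by ring
  have e2 : (∑ i ∈ Finset.range n, (1/(n:ℝ)) • L (p i))
      = (∑ i ∈ Finset.range n, L (p i))/n := by
    simp only [smul_eq_mul]
    rw [Finset.sum_div]
    exact Finset.sum_congr rfl fun i _ => by ring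
  rw [e1, e2] at h
  rw [div_le_iff₀ hn0] at h
  linarith [h]

lemma ville_prod {Ω : Type*} [MeasurableSpace Ω] (P : Measure Ω) [IsProbabilityMeasure P]
    (X : ℕ → Ω → ℝ) (hXm : ∀ i, Measurable (X i))
    (hindep : iIndepFun X P)
    (g : ℕ → ℝ → ℝ) (hgm : ∀ i, Measurable (g i)) (hg0 : ∀ i x, 0 ≤ g i x)
    (c : ℕ → ℝ) (hbd : ∀ i, ∀ᵐ ω ∂P, g i (X i ω) ≤ c i)
    (hmean : ∀ i, (∫ ω, g i (X i ω) ∂P) ≤ 1)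
    (t : ℝ) (ht : 0 < t) :
    P {ω | ∃ n, 1 ≤ n ∧ t ≤ ∏ i ∈ Finset.range n, g i (X i ω)} ≤ ENNReal.ofReal (1/t) := by
  classical
  rcases le_or_gt t 1 with h1 | h1
  · refine le_trans prob_le_one ?_
    rw [← ENNReal.ofReal_one]
    exact ENNReal.ofReal_le_ofReal (by rw [le_div_iff₀ ht]; linarith)
  set Y : ℕ → Ω → ℝ := fun i ω => g i (X i ω) with hYdef
  set W : ℕ → Ω → ℝ := fun n ω => ∏ i ∈ Finset.range n, Y i ω with hWdef
  have hYm : ∀ i, Measurable (Y i) := fun i => (hgm i).comp (hXm i)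
  have hWm : ∀ n, Measurable (W n) := fun n => Finset.measurable_prod _ fun i _ => hYm i
  have hW0 : ∀ n ω, 0 ≤ W n ω := fun n ω => Finset.prod_nonneg fun i _ => hg0 i _
  have hWae : ∀ᵐ ω ∂P, ∀ i, Y i ω ≤ max (c i) 1 := by
    rw [MeasureTheory.ae_all_iff]
    intro i; filter_upwards [hbd i] with ω h using le_trans h (le_max_left _ _)
  have hWint : ∀ n, Integrable (W n) P := by
    intro n
    refine Integrable.mono' (integrable_const (∏ i ∈ Finset.range n, max (c i) 1))
      (hWm n).aestronglyMeasurable ?_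
    filter_upwards [hWae] with ω h
    rw [Real.norm_eq_abs, abs_of_nonneg (hW0 n ω)]
    exact Finset.prod_le_prod (fun i _ => hg0 i _) (fun i _ => h i)
  set B : ℕ → Set Ω := fun n => {ω | ∀ k, k < n → W k ω < t} with hBdef
  set A : ℕ → Set Ω := fun n => B n ∩ {ω | t ≤ W n ω} with hAdef
  have hBm : ∀ n, MeasurableSet (B n) := by
    intro n
    have hBeq : B n = ⋂ k ∈ Finset.range n, {ω | W k ω < t} := by
      ext ω; simp [hBdef, Finset.mem_range]
    rw [hBeq]
    exact Finset.measurableSet_biInter _ (fun k _ => measurableSet_lt (hWm k) measurable_const)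
  have hAm : ∀ n, MeasurableSet (A n) :=
    fun n => (hBm n).inter (measurableSet_le measurable_const (hWm n))
  have hsub : {ω | ∃ n, 1 ≤ n ∧ t ≤ W n ω} ⊆ ⋃ n, A n := by
    intro ω hω
    obtain ⟨n, _, hn⟩ := hω
    have hex : ∃ k, t ≤ W k ω := ⟨n, hn⟩
    refine Set.mem_iUnion.2 ⟨Nat.find hex, ?_, Nat.find_spec hex⟩
    intro k hk
    exact lt_of_not_ge (Nat.find_min hex hk)
  have hdisj : Pairwise (Function.onFun Disjoint A) := by
    have key : ∀ i j, i < j → Disjoint (A i) (A j) := by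
      intro i j hij
      refine Set.disjoint_left.2 fun ω hi hj => ?_
      exact absurd (hj.1 i hij) (not_lt.2 hi.2)
    intro i j hij
    rcases lt_or_gt_of_ne hij with h | h
    · exact key i j h
    · exact (key j i h).symm
  have hBsplit : ∀ n, B n = A n ∪ B (n+1) := by
    intro n; ext ω
    constructor
    · intro hω
      rcases le_or_gt t (W n ω) with h | h
      · exact Or.inl ⟨hω, h⟩
      · refine Or.inr (fun k hk => ?_)
        rcases Nat.lt_succ_iff_lt_or_eq.1 hk with h' | h'
        · exact hω k h'
        · subst h'; exact h
    · rintro (⟨h, _⟩ | h)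
      · exact h
      · exact fun k hk => h k (Nat.lt_succ_of_lt hk)
  have hABdisj : ∀ n, Disjoint (A n) (B (n+1)) := by
    intro n
    refine Set.disjoint_left.2 fun ω hA hB => ?_
    exact absurd (hB n (Nat.lt_succ_self n)) (not_lt.2 hA.2)
  have hstep : ∀ n, (∫ ω in B (n+1), W (n+1) ω ∂P) ≤ ∫ ω in B (n+1), W n ω ∂P := by
    intro n
    have hBm' := hBm (n+1)
    rw [← MeasureTheory.integral_indicator hBm', ← MeasureTheory.integral_indicator hBm']
    have hid : (B (n+1)).indicator (W (n+1)) = fun ω => (B (n+1)).indicator (W n) ω * Y n ω := by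
      funext ω
      by_cases hω : ω ∈ B (n+1)
      · rw [Set.indicator_of_mem hω, Set.indicator_of_mem hω, hWdef]
        simp [Finset.prod_range_succ]
      · rw [Set.indicator_of_notMem hω, Set.indicator_of_notMem hω, zero_mul]
    rw [hid]
    -- independence setup
    set ext : ({ x // x ∈ Finset.range n } → ℝ) → (ℕ → ℝ) :=
      fun v i => if h : i ∈ Finset.range n then v ⟨i, h⟩ else 0 with hext
    have hextm : Measurable ext := measurable_pi_lambda _ (fun i => by
      by_cases h : i ∈ Finset.range n
      · simp only [hext, dif_pos h]; exact measurable_pi_apply _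
      · simp only [hext, dif_neg h]; exact measurable_const)
    set Φ : (ℕ → ℝ) → ℝ := fun u => Set.indicator
        {u : ℕ → ℝ | ∀ k, k < n+1 → (∏ i ∈ Finset.range k, g i (u i)) < t}
        (fun u => ∏ i ∈ Finset.range n, g i (u i)) u with hΦ
    have hΦm : Measurable Φ := by
      apply Measurable.indicator
      · exact Finset.measurable_prod _ (fun i _ => (hgm i).comp (measurable_pi_apply i))
      · have heq : {u : ℕ → ℝ | ∀ k, k < n+1 → (∏ i ∈ Finset.range k, g i (u i)) < t}
            = ⋂ k ∈ Finset.range (n+1), {u : ℕ → ℝ | (∏ i ∈ Finset.range k, g i (u i)) < t} := by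
          ext u; simp
        rw [heq]
        exact Finset.measurableSet_biInter _ (fun k _ => measurableSet_lt
          (Finset.measurable_prod _ fun i _ => (hgm i).comp (measurable_pi_apply i))
          measurable_const)
    set ψ : ({ x // x ∈ ({n} : Finset ℕ) } → ℝ) → ℝ :=
      fun v => g n (v ⟨n, Finset.mem_singleton_self n⟩) with hψ
    have hψm : Measurable ψ := (hgm n).comp (measurable_pi_apply _)
    have hSdisj : Disjoint (Finset.range n) ({n} : Finset ℕ) := by simp
    have base := hindep.indepFun_finset (Finset.range n) {n} hSdisj hXm
    have hcomp := base.comp (hΦm.comp hextm) hψm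
    have hvals : ∀ ω k, k ≤ n →
        (∏ i ∈ Finset.range k, g i (ext (fun i : (Finset.range n : Finset ℕ) => X i ω) i))
          = W k ω := by
      intro ω k hk
      apply Finset.prod_congr rfl
      intro i hi
      have hin : i ∈ Finset.range n := Finset.mem_range.2 (lt_of_lt_of_le (Finset.mem_range.1 hi) hk)
      have hval : ext (fun i : (Finset.range n : Finset ℕ) => X i ω) i = X i ω := by
        rw [hext]; exact dif_pos hin
      rw [hval]
    have hleft : ((Φ ∘ ext) ∘ (fun ω (i : (Finset.range n : Finset ℕ)) => X i ω))
        = fun ω => (B (n+1)).indicator (W n) ω := by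
      funext ω
      simp only [Function.comp_apply, hΦ]
      by_cases hω : ω ∈ B (n+1)
      · rw [Set.indicator_of_mem hω]
        rw [Set.indicator_of_mem]
        · exact hvals ω n le_rfl
        · intro k hk
          rw [hvals ω k (Nat.lt_succ_iff.1 hk)]
          exact hω k hk
      · rw [Set.indicator_of_notMem hω]
        rw [Set.indicator_of_notMem]
        intro hmem
        apply hω
        intro k hk
        have := hmem k hk
        rwa [hvals ω k (Nat.lt_succ_iff.1 hk)] at this
    have hright : (ψ ∘ (fun ω (i : ({n} : Finset ℕ)) => X i ω)) = Y n := rfl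
    rw [hleft, hright] at hcomp
    have hind0 : (0:Ω → ℝ) ≤ (B (n+1)).indicator (W n) :=
      fun ω => Set.indicator_nonneg (fun x _ => hW0 n x) ω
    have heq := hcomp.integral_mul_eq_mul_integral
      ((hWm n).indicator hBm').aestronglyMeasurable (hYm n).aestronglyMeasurable
    have hprod : (fun ω => (B (n+1)).indicator (W n) ω * Y n ω)
        = ((B (n+1)).indicator (W n)) * (Y n) := rfl
    rw [hprod, heq]
    have hip : 0 ≤ ∫ ω, (B (n+1)).indicator (W n) ω ∂P :=
      MeasureTheory.integral_nonneg hind0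
    calc (∫ ω, (B (n+1)).indicator (W n) ω ∂P) * ∫ ω, Y n ω ∂P
        ≤ (∫ ω, (B (n+1)).indicator (W n) ω ∂P) * 1 :=
          mul_le_mul_of_nonneg_left (hmean n) hip
      _ = ∫ ω, (B (n+1)).indicator (W n) ω ∂P := mul_one _
  have hDnn : ∀ n, 0 ≤ ∫ ω in B n, W n ω ∂P := fun n =>
    MeasureTheory.setIntegral_nonneg (hBm n) (fun ω _ => hW0 n ω)
  have htel : ∀ N, (∑ n ∈ Finset.range N, ∫ ω in A n, W n ω ∂P)
      + (∫ ω in B N, W N ω ∂P) ≤ 1 := by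
    intro N
    induction N with
    | zero =>
      simp only [Finset.range_zero, Finset.sum_empty, zero_add]
      have hB0 : B 0 = Set.univ := by ext ω; simp [hBdef]
      have hW0' : W 0 = fun _ => (1:ℝ) := by funext ω; simp [hWdef]
      rw [hB0, hW0', MeasureTheory.Measure.restrict_univ, MeasureTheory.integral_const]
      simp
    | succ N ih =>
      rw [Finset.sum_range_succ]
      have hsplitN : (∫ ω in B N, W N ω ∂P)
          = (∫ ω in A N, W N ω ∂P) + (∫ ω in B (N+1), W N ω ∂P) := by
        rw [hBsplit N]
        exact MeasureTheory.setIntegral_union (hABdisj N) (hBm (N+1))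
          ((hWint N).integrableOn) ((hWint N).integrableOn)
      linarith [hstep N, ih, hsplitN]
  have hAbound : ∀ n, t * (P (A n)).toReal ≤ ∫ ω in A n, W n ω ∂P := fun n => by
    have h := MeasureTheory.setIntegral_ge_of_const_le (hAm n) (measure_ne_top P _)
      (fun ω hω => hω.2) ((hWint n).integrableOn)
    rw [smul_eq_mul, mul_comm] at h
    exact h
  have hfin : ∀ N, (∑ n ∈ Finset.range N, P (A n)) ≤ ENNReal.ofReal (1/t) := by
    intro N
    have h2 : t * (∑ n ∈ Finset.range N, (P (A n)).toReal)
        ≤ ∑ n ∈ Finset.range N, ∫ ω in A n, W n ω ∂P := by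
      rw [Finset.mul_sum]
      exact Finset.sum_le_sum (fun n _ => hAbound n)
    have hsum : (∑ n ∈ Finset.range N, (P (A n)).toReal) ≤ 1/t := by
      rw [le_div_iff₀ ht, mul_comm]
      linarith [h2, htel N, hDnn N]
    calc (∑ n ∈ Finset.range N, P (A n))
        = ENNReal.ofReal (∑ n ∈ Finset.range N, (P (A n)).toReal) := by
          rw [ENNReal.ofReal_sum_of_nonneg (fun n _ => ENNReal.toReal_nonneg)]
          exact Finset.sum_congr rfl (fun n _ => (ENNReal.ofReal_toReal (measure_ne_top P _)).symm)
      _ ≤ ENNReal.ofReal (1/t) := ENNReal.ofReal_le_ofReal hsum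
  calc P {ω | ∃ n, 1 ≤ n ∧ t ≤ W n ω} ≤ P (⋃ n, A n) := measure_mono hsub
    _ = ∑' n, P (A n) := measure_iUnion hdisj hAm
    _ ≤ ENNReal.ofReal (1/t) := by
        rw [ENNReal.tsum_eq_iSup_sum]
        refine iSup_le fun s => ?_
        refine le_trans (Finset.sum_le_sum_of_subset ?_) (hfin (s.sup id + 1))
        intro i hi
        exact Finset.mem_range.2 (Nat.lt_succ_of_le (Finset.le_sup (f := id) hi))

/-- Uniform Bennett/Hoeffding-type inequality for independent zero-mean random variables
bounded above by `b` with second moments at most `σᵢ²`: with `νₙ = (1/n) ∑_{i≤n} σᵢ²`,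
`𝒱(s,n) = n log (b²/(b²+νₙ) exp(-(νₙ/b)s) + νₙ/(b²+νₙ) exp(bs))` and
`ζ = b/(b²+νₘ) log ((1 + εb/νₘ)/(1 - ε/b))`, we have
`Pr{∃ n ≥ 1, ζ(Sₙ - mε) - 𝒱(ζ,n) + 𝒱(ζ,m) ≥ 0}
  ≤ ((1 + bε/νₘ)^{-(νₘ+bε)/(b²+νₘ)} (1 - ε/b)^{-(b²-bε)/(b²+νₘ)})^m`. -/
theorem statement10 {Ω : Type*} [MeasurableSpace Ω] (P : Measure Ω) [IsProbabilityMeasure P]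
    (X : ℕ → Ω → ℝ) (hXm : ∀ i, Measurable (X i))
    (hindep : iIndepFun X P)
    (b : ℝ) (hb : 0 < b) (σ : ℕ → ℝ)
    (hint : ∀ i, Integrable (X i) P)
    (hmean : ∀ i, (∫ ω, X i ω ∂P) = 0)
    (hint2 : ∀ i, Integrable (fun ω => (X i ω) ^ 2) P)
    (hvar : ∀ i, (∫ ω, (X i ω) ^ 2 ∂P) ≤ (σ i) ^ 2)
    (hbd : ∀ i, ∀ᵐ ω ∂P, X i ω ≤ b)
    (ν : ℕ → ℝ) (hν : ∀ n, ν n = (∑ i ∈ Finset.range n, (σ i) ^ 2) / n)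
    (V : ℝ → ℕ → ℝ)
    (hV : ∀ s n, V s n = n * Real.log
      (b ^ 2 / (b ^ 2 + ν n) * Real.exp (-(ν n / b) * s)
        + ν n / (b ^ 2 + ν n) * Real.exp (b * s)))
    (m : ℕ) (hm : 1 ≤ m) (hνm : 0 < ν m)
    (ε : ℝ) (hε : 0 < ε) (hεb : ε < b)
    (ζ : ℝ) (hζ : ζ = b / (b ^ 2 + ν m) * Real.log ((1 + ε * b / ν m) / (1 - ε / b))) :
    P {ω | ∃ n : ℕ, 1 ≤ n ∧
        0 ≤ ζ * ((∑ i ∈ Finset.range n, X i ω) - m * ε) - V ζ n + V ζ m}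
      ≤ ENNReal.ofReal
        (((1 + b * ε / ν m) ^ (-((ν m + b * ε) / (b ^ 2 + ν m)))
          * (1 - ε / b) ^ (-((b ^ 2 - b * ε) / (b ^ 2 + ν m)))) ^ m) := by
  classical
  have hν0 : ∀ n, 0 ≤ ν n := by
    intro n; rw [hν]
    exact div_nonneg (Finset.sum_nonneg fun i _ => sq_nonneg _) (Nat.cast_nonneg n)
  have hbe : 0 < b - ε := sub_pos.2 hεb
  have hQ : 0 < 1 - ε/b := by
    rw [sub_pos, div_lt_one hb]; exact hεb
  have hPp : 0 < 1 + ε*b/(ν m) := by positivity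
  have hApos : 0 < (1 + ε*b/(ν m))/(1 - ε/b) := div_pos hPp hQ
  have hA1 : 1 < (1 + ε*b/(ν m))/(1 - ε/b) := by
    rw [lt_div_iff₀ hQ, one_mul]
    have h2 : 0 < ε*b/(ν m) := by positivity
    have h3 : ε/b > 0 := by positivity
    linarith
  have hbu : (0:ℝ) < b^2 + ν m := by positivity
  have hζpos : 0 < ζ := by
    rw [hζ]
    exact mul_pos (div_pos hb hbu) (Real.log_pos hA1)
  set F : ℝ → ℝ := fun v => (b^2 * Real.exp (-ζ/b*v) + v * Real.exp (ζ*b))/(b^2+v) with hF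
  set L : ℝ → ℝ := fun v => Real.log (b^2 * Real.exp (-ζ/b*v) + v * Real.exp (ζ*b))
    - Real.log (b^2+v) with hL
  have hNpos : ∀ v : ℝ, 0 ≤ v → 0 < b^2 * Real.exp (-ζ/b*v) + v * Real.exp (ζ*b) :=
    fun v hv => add_pos_of_pos_of_nonneg (by positivity) (mul_nonneg hv (Real.exp_pos _).le)
  have hDpos : ∀ v : ℝ, 0 ≤ v → (0:ℝ) < b^2 + v := fun v hv => by positivity
  have hFpos : ∀ v : ℝ, 0 ≤ v → 0 < F v := fun v hv => div_pos (hNpos v hv) (hDpos v hv)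
  have hLF : ∀ v : ℝ, 0 ≤ v → L v = Real.log (F v) := by
    intro v hv
    rw [hL, hF, Real.log_div (hNpos v hv).ne' (hDpos v hv).ne']
  have hVL : ∀ n, V ζ n = n * L (ν n) := by
    intro n
    have hLn : L (ν n) = Real.log (b^2 * Real.exp (-ζ/b*(ν n)) + (ν n) * Real.exp (ζ*b))
        - Real.log (b^2+ν n) := by rw [hL]
    rw [hV, hLn]
    congr 1
    have e1 : -(ν n / b) * ζ = -ζ/b*(ν n) := by ring
    have e2 : b * ζ = ζ * b := by ring
    rw [e1, e2, ← Real.log_div (hNpos (ν n) (hν0 n)).ne' (hDpos (ν n) (hν0 n)).ne']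
    congr 1
    field_simp
  have hmgf : ∀ i, (∫ ω, Real.exp (ζ * X i ω) ∂P) ≤ F ((σ i)^2) := by
    intro i
    have := mgf_bound P (hXm i) (hint i) (hmean i) (hint2 i) (hvar i) (sq_nonneg (σ i))
      hb (hbd i) hζpos
    rw [hF]
    exact this
  have hconc : ConcaveOn ℝ (Set.Ici 0) L := by
    rw [hL]; exact logf_concave hζpos hb
  have hJ : ∀ n, 1 ≤ n → (∏ i ∈ Finset.range n, F ((σ i)^2)) ≤ Real.exp (V ζ n) := by
    intro n hn
    have hsum := jensen_aux hconc (fun i => (σ i)^2) (fun i => sq_nonneg _) hn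
    rw [← hν n] at hsum
    have hprodeq : (∏ i ∈ Finset.range n, F ((σ i)^2))
        = Real.exp (∑ i ∈ Finset.range n, L ((σ i)^2)) := by
      rw [Real.exp_sum]
      exact Finset.prod_congr rfl fun i _ => by
        rw [hLF _ (sq_nonneg _), Real.exp_log (hFpos _ (sq_nonneg _))]
    rw [hprodeq, hVL n]
    exact Real.exp_le_exp.2 hsum
  set t : ℝ := Real.exp (ζ*(m*ε) - V ζ m) with htdef
  have htpos : 0 < t := Real.exp_pos _
  set gg : ℕ → ℝ → ℝ := fun i x => Real.exp (ζ*x) / F ((σ i)^2) with hgg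
  have hggm : ∀ i, Measurable (gg i) :=
    fun i => ((measurable_id.const_mul ζ).exp).div_const _
  have hgg0 : ∀ i x, 0 ≤ gg i x := fun i x => div_nonneg (Real.exp_pos _).le
    (hFpos _ (sq_nonneg _)).le
  have hggbd : ∀ i, ∀ᵐ ω ∂P, gg i (X i ω) ≤ Real.exp (ζ*b) / F ((σ i)^2) := by
    intro i
    filter_upwards [hbd i] with ω h
    exact (div_le_div_iff_of_pos_right (hFpos _ (sq_nonneg _))).2
      (Real.exp_le_exp.2 (mul_le_mul_of_nonneg_left h hζpos.le))
  have hggmean : ∀ i, (∫ ω, gg i (X i ω) ∂P) ≤ 1 := by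
    intro i
    rw [hgg]
    simp only
    rw [MeasureTheory.integral_div]
    exact (div_le_one (hFpos _ (sq_nonneg _))).2 (hmgf i)
  have hsubev : {ω | ∃ n : ℕ, 1 ≤ n ∧
        0 ≤ ζ * ((∑ i ∈ Finset.range n, X i ω) - m * ε) - V ζ n + V ζ m}
      ⊆ {ω | ∃ n, 1 ≤ n ∧ t ≤ ∏ i ∈ Finset.range n, gg i (X i ω)} := by
    intro ω hω
    obtain ⟨n, hn, hineq⟩ := hω
    refine ⟨n, hn, ?_⟩
    have hFn : 0 < ∏ i ∈ Finset.range n, F ((σ i)^2) :=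
      Finset.prod_pos fun i _ => hFpos _ (sq_nonneg _)
    have h1 : t * ∏ i ∈ Finset.range n, F ((σ i)^2) ≤ t * Real.exp (V ζ n) :=
      mul_le_mul_of_nonneg_left (hJ n hn) htpos.le
    have h2 : t * Real.exp (V ζ n) ≤ Real.exp (ζ * ∑ i ∈ Finset.range n, X i ω) := by
      rw [htdef, ← Real.exp_add]
      apply Real.exp_le_exp.2
      nlinarith [hineq]
    have h3 : Real.exp (ζ * ∑ i ∈ Finset.range n, X i ω)
        = ∏ i ∈ Finset.range n, Real.exp (ζ * X i ω) := by
      rw [← Real.exp_sum]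
      congr 1
      rw [Finset.mul_sum]
    have h4 : t ≤ (∏ i ∈ Finset.range n, Real.exp (ζ * X i ω))
        / ∏ i ∈ Finset.range n, F ((σ i)^2) := by
      rw [le_div_iff₀ hFn]
      nlinarith [h1, h2, h3]
    calc t ≤ (∏ i ∈ Finset.range n, Real.exp (ζ * X i ω))
          / ∏ i ∈ Finset.range n, F ((σ i)^2) := h4
      _ = ∏ i ∈ Finset.range n, gg i (X i ω) := by
          rw [← Finset.prod_div_distrib]
  have hville := ville_prod P X hXm hindep gg hggm hgg0
    (fun i => Real.exp (ζ*b) / F ((σ i)^2)) hggbd hggmean t htpos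
  refine le_trans (le_trans (measure_mono hsubev) hville) (le_of_eq ?_)
  congr 1
  -- 1/t = RHS^m
  set lA := Real.log ((1 + ε*b/(ν m))/(1 - ε/b)) with hlA
  have hζval : ζ = b/(b^2+ν m)*lA := hζ
  have hexplA : Real.exp lA = (1 + ε*b/(ν m))/(1 - ε/b) := Real.exp_log hApos
  have hlogA : lA = Real.log (1 + b*ε/(ν m)) - Real.log (1 - ε/b) := by
    rw [hlA, Real.log_div hPp.ne' hQ.ne']
    congr 2
    ring
  have harg : ζ*b = -ζ/b*(ν m) + lA := by
    rw [hζval]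
    field_simp
    ring
  have hNu : b^2 * Real.exp (-ζ/b*(ν m)) + (ν m) * Real.exp (ζ*b)
      = Real.exp (-ζ/b*(ν m)) * (b^2 + (ν m)*((1 + ε*b/(ν m))/(1 - ε/b))) := by
    rw [harg, Real.exp_add, hexplA]
    ring
  have hval : b^2 + (ν m)*((1 + ε*b/(ν m))/(1 - ε/b)) = b*(b^2+ν m)/(b-ε) := by
    field_simp [hνm.ne', hQ.ne', hbe.ne', hb.ne']
    ring
  have hLu : L (ν m) = -ζ/b*(ν m) + (Real.log b + Real.log (b^2+ν m) - Real.log (b-ε))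
      - Real.log (b^2+ν m) := by
    rw [hL]
    simp only
    rw [hNu, hval, Real.log_mul (Real.exp_pos _).ne'
      (div_pos (mul_pos hb hbu) hbe).ne',
      Real.log_exp, Real.log_div (mul_pos hb hbu).ne' hbe.ne', Real.log_mul hb.ne' hbu.ne']
  have hQlog : Real.log (1 - ε/b) = Real.log (b-ε) - Real.log b := by
    rw [show (1:ℝ) - ε/b = (b-ε)/b from by field_simp, Real.log_div hbe.ne' hb.ne']
  have hζu : -ζ/b*(ν m) = -((ν m)/(b^2+ν m))*lA := by
    rw [hζval]; field_simp
  have hζε : ζ*ε = b*ε/(b^2+ν m)*lA := by rw [hζval]; ring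
  have hexp_eq : L (ν m) - ζ*ε
      = Real.log (1 + b*ε/(ν m)) * (-((ν m + b*ε)/(b^2+ν m)))
        + Real.log (1 - ε/b) * (-((b^2 - b*ε)/(b^2+ν m))) := by
    rw [hLu, hζu, hζε, hlogA, hQlog]
    field_simp
    ring
  have hPp' : (0:ℝ) < 1 + b*ε/(ν m) := by
    rw [show (1:ℝ) + b*ε/(ν m) = 1 + ε*b/(ν m) from by ring]
    exact hPp
  rw [htdef, one_div, ← Real.exp_neg]
  have hxp : -(ζ*((m:ℝ)*ε) - V ζ m) = (m:ℝ) * (L (ν m) - ζ*ε) := by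
    rw [hVL m]; ring
  rw [hxp, Real.exp_nat_mul]
  congr 1
  rw [Real.rpow_def_of_pos hPp', Real.rpow_def_of_pos hQ, ← Real.exp_add, hexp_eq]
end

section
/- Let X₁, X₂, … be independent real random variables such that Xᵢ has the normal (Gaussian) distribution with mean μᵢ and variance νᵢ > 0 for each i ∈ ℕ. Define Sₙ = Σ_{i=1}^{n} Xᵢ, μ̄ₙ = (1/n) Σ_{i=1}^{n} μᵢ, ν̄ₙ = (1/n) Σ_{i=1}^{n} νᵢ, and 𝒱(s, n) = n(μ̄ₙ s + ν̄ₙ s²/2) for s ∈ ℝ, n ∈ ℕ. Then for every positive integer m and every θ ∈ ℝ, with ζ = (θ − μ̄ₘ)/ν̄ₘ: Pr{ ∃ n ∈ ℕ, ζ(Sₙ − m θ) − 𝒱(ζ, n) + 𝒱(ζ, m) ≥ 0 } ≤ [ exp( −(θ − μ̄ₘ)²/(2 ν̄ₘ) ) ]^m. -/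
open MeasureTheory ProbabilityTheory Real

lemma gauss_pdf_mul (μ₀ t : ℝ) (v : NNReal) (hv : v ≠ 0) (x : ℝ) :
    gaussianPDFReal μ₀ v x * rexp (t * x)
      = rexp (t * μ₀ + v * t ^ 2 / 2) * gaussianPDFReal (μ₀ + t * v) v x := by
  have hv' : (v : ℝ) ≠ 0 := by exact_mod_cast hv
  have h2 : rexp (-(x - μ₀) ^ 2 / (2 * v)) * rexp (t * x)
      = rexp (t * μ₀ + v * t ^ 2 / 2) * rexp (-(x - (μ₀ + t * v)) ^ 2 / (2 * v)) := by
    rw [← Real.exp_add, ← Real.exp_add, Real.exp_eq_exp]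
    field_simp
    ring
  simp only [gaussianPDFReal]
  rw [mul_assoc, h2]
  ring

lemma gauss_integrable_exp (μ₀ : ℝ) (v : NNReal) (hv : v ≠ 0) (t : ℝ) :
    Integrable (fun x => rexp (t * x)) (gaussianReal μ₀ v) := by
  rw [gaussianReal_of_var_ne_zero _ hv]
  have hpdf : (gaussianPDF μ₀ v) = fun x => ((gaussianPDFReal μ₀ v x).toNNReal : ENNReal) := rfl
  rw [hpdf]
  rw [integrable_withDensity_iff_integrable_smul
    ((measurable_gaussianPDFReal μ₀ v).real_toNNReal)]
  have : (fun x => ((gaussianPDFReal μ₀ v x).toNNReal : ℝ) • rexp (t * x))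
      = fun x => rexp (t * μ₀ + v * t ^ 2 / 2) * gaussianPDFReal (μ₀ + t * v) v x := by
    ext x
    rw [smul_eq_mul, Real.coe_toNNReal _ (gaussianPDFReal_nonneg μ₀ v x)]
    exact gauss_pdf_mul μ₀ t v hv x
  simp only [NNReal.smul_def] at this ⊢
  rw [this]
  exact (integrable_gaussianPDFReal _ v).const_mul _

lemma gauss_integral_exp (μ₀ : ℝ) (v : NNReal) (hv : v ≠ 0) (t : ℝ) :
    ∫ x, rexp (t * x) ∂(gaussianReal μ₀ v) = rexp (t * μ₀ + v * t ^ 2 / 2) := by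
  rw [gaussianReal_of_var_ne_zero _ hv]
  have hpdf : (gaussianPDF μ₀ v) = fun x => ((gaussianPDFReal μ₀ v x).toNNReal : ENNReal) := rfl
  rw [hpdf, integral_withDensity_eq_integral_smul
    ((measurable_gaussianPDFReal μ₀ v).real_toNNReal)]
  have : (fun x => ((gaussianPDFReal μ₀ v x).toNNReal : ℝ) • rexp (t * x))
      = fun x => rexp (t * μ₀ + v * t ^ 2 / 2) * gaussianPDFReal (μ₀ + t * v) v x := by
    ext x
    rw [smul_eq_mul, Real.coe_toNNReal _ (gaussianPDFReal_nonneg μ₀ v x)]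
    exact gauss_pdf_mul μ₀ t v hv x
  simp only [NNReal.smul_def] at this ⊢
  rw [this, integral_const_mul, integral_gaussianPDFReal_eq_one _ hv, mul_one]

/-- Uniform inequality for sums of independent Gaussian random variables with means `μᵢ`
and variances `νᵢ > 0`: with `μ̄ₙ, ν̄ₙ` the averaged means and variances,
`𝒱(s,n) = n (μ̄ₙ s + ν̄ₙ s²/2)` and `ζ = (θ - μ̄ₘ)/ν̄ₘ`, we have
`Pr{∃ n ≥ 1, ζ(Sₙ - mθ) - 𝒱(ζ,n) + 𝒱(ζ,m) ≥ 0} ≤ (exp (-(θ-μ̄ₘ)²/(2ν̄ₘ)))^m`. -/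
theorem statement11 {Ω : Type*} [MeasurableSpace Ω] (P : Measure Ω) [IsProbabilityMeasure P]
    (X : ℕ → Ω → ℝ) (hXm : ∀ i, Measurable (X i))
    (hindep : iIndepFun X P)
    (μ : ℕ → ℝ) (v : ℕ → NNReal) (hv : ∀ i, 0 < v i)
    (hdist : ∀ i, Measure.map (X i) P = gaussianReal (μ i) (v i))
    (μbar : ℕ → ℝ) (hμbar : ∀ n, μbar n = (∑ i ∈ Finset.range n, μ i) / n)
    (νbar : ℕ → ℝ) (hνbar : ∀ n, νbar n = (∑ i ∈ Finset.range n, (v i : ℝ)) / n)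
    (V : ℝ → ℕ → ℝ)
    (hV : ∀ s n, V s n = n * (μbar n * s + νbar n * s ^ 2 / 2))
    (m : ℕ) (hm : 1 ≤ m) (θ : ℝ)
    (ζ : ℝ) (hζ : ζ = (θ - μbar m) / νbar m) :
    P {ω | ∃ n : ℕ, 1 ≤ n ∧
        0 ≤ ζ * ((∑ i ∈ Finset.range n, X i ω) - m * θ) - V ζ n + V ζ m}
      ≤ ENNReal.ofReal ((Real.exp (-(θ - μbar m) ^ 2 / (2 * νbar m))) ^ m) := by
  -- constants
  set c : ℕ → ℝ := fun i => ζ * μ i + (v i : ℝ) * ζ ^ 2 / 2 with hc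
  set g : ℕ → Ω → ℝ := fun i ω => rexp (ζ * X i ω - c i) with hg
  set F : ℕ → Ω → ℝ := fun n ω => ∏ i ∈ Finset.range (n + 1), g i ω with hF
  -- V equals partial sums of c
  have hVc : ∀ n : ℕ, 1 ≤ n → V ζ n = ∑ i ∈ Finset.range n, c i := by
    intro n hn
    have hn' : (n : ℝ) ≠ 0 := Nat.cast_ne_zero.mpr (Nat.one_le_iff_ne_zero.mp hn)
    rw [hV, hμbar, hνbar]
    have : ∑ i ∈ Finset.range n, c i
        = (∑ i ∈ Finset.range n, μ i) * ζ + (∑ i ∈ Finset.range n, (v i : ℝ)) * ζ ^ 2 / 2 := by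
      simp only [hc]
      rw [Finset.sum_add_distrib, ← Finset.mul_sum, ← Finset.sum_div, ← Finset.sum_mul]
      ring
    rw [this]
    field_simp
  -- measurability and independence of g
  have hgm : ∀ i, Measurable (g i) :=
    fun i => (((hXm i).const_mul ζ).sub_const (c i)).exp
  have hgindep : iIndepFun g P := by
    have := hindep.comp (fun i x => rexp (ζ * x - c i))
      (fun i => ((measurable_id.const_mul ζ).sub_const (c i)).exp)
    exact this
  -- integrability and expectation of g
  have hgint : ∀ i, Integrable (g i) P := by
    intro i
    have h1 : Integrable (fun x => rexp (ζ * x)) (Measure.map (X i) P) := by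
      rw [hdist i]; exact gauss_integrable_exp _ _ (hv i).ne' ζ
    have h2 : Integrable (fun ω => rexp (ζ * X i ω)) P :=
      (integrable_map_measure h1.aestronglyMeasurable (hXm i).aemeasurable).mp h1
    have : g i = fun ω => rexp (-c i) * rexp (ζ * X i ω) := by
      ext ω; rw [← Real.exp_add, hg]; ring_nf
    rw [this]
    exact h2.const_mul _
  have hgE : ∀ i, ∫ ω, g i ω ∂P = 1 := by
    intro i
    have h2 : (fun ω => g i ω) = fun ω => rexp (-c i) * rexp (ζ * X i ω) := by
      ext ω; rw [← Real.exp_add, hg]; ring_nf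
    rw [h2]
    rw [integral_const_mul]
    have h3 : ∫ ω, rexp (ζ * X i ω) ∂P = ∫ x, rexp (ζ * x) ∂(Measure.map (X i) P) := by
      rw [integral_map (hXm i).aemeasurable]
      exact (measurable_id.const_mul ζ).exp.aestronglyMeasurable
    rw [h3, hdist i, gauss_integral_exp _ _ (hv i).ne' ζ, ← Real.exp_add, hc]
    simp only []
    rw [← Real.exp_zero]
    congr 1
    ring
  -- integrability and expectation of F
  have hFprod : ∀ n, F n = ∏ j ∈ Finset.range (n + 1), g j := by
    intro n; ext ω; simp [hF, Finset.prod_apply]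
  have hFrec : ∀ n, F (n + 1) = F n * fun ω => g (n + 1) ω := by
    intro n; ext ω
    simp only [hF, Pi.mul_apply]
    rw [Finset.prod_range_succ]
  have hFindep : ∀ n, IndepFun (F n) (g (n + 1)) P := by
    intro n
    rw [hFprod n]
    exact hgindep.indepFun_prod_range_succ hgm (n + 1)
  have hFint : ∀ n, Integrable (F n) P := by
    intro n
    induction n with
    | zero => simpa [hF] using hgint 0
    | succ k ih =>
        rw [hFrec k]
        exact (hFindep k).integrable_mul ih (hgint (k + 1))
  have hFE : ∀ n, ∫ ω, F n ω ∂P = 1 := by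
    intro n
    induction n with
    | zero => simpa [hF] using hgE 0
    | succ k ih =>
        rw [hFrec k]
        rw [(hFindep k).integral_mul_eq_mul_integral (hFint k).aestronglyMeasurable (hgint (k + 1)).aestronglyMeasurable]
        rw [ih, hgE (k + 1), mul_one]
  -- natural filtration
  set 𝒢 : Filtration ℕ _ := Filtration.natural X (fun i => (hXm i).stronglyMeasurable) with h𝒢
  have hXG : ∀ i n, i ≤ n → Measurable[𝒢 n] (X i) := by
    intro i n hin
    exact ((Filtration.stronglyAdapted_natural (fun i => (hXm i).stronglyMeasurable) i).mono
      (𝒢.mono hin)).measurable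
  have hadp : StronglyAdapted 𝒢 F := by
    intro n
    refine Measurable.stronglyMeasurable ?_
    refine Finset.measurable_prod _ (fun i hi => ?_)
    have hXi := hXG i n (Nat.lt_succ_iff.mp (Finset.mem_range.mp hi))
    exact ((hXi.const_mul ζ).sub_const (c i)).exp
  -- independence of the next increment from the past
  have hindepG : ∀ n, Indep (MeasurableSpace.comap (X (n + 1)) inferInstance) (𝒢 n) P := by
    intro n
    have hii : iIndep (fun i => MeasurableSpace.comap (X i) inferInstance) P := hindep
    have hdisj : Disjoint {j : ℕ | j ≤ n} ({n + 1} : Set ℕ) := by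
      simp [Set.disjoint_singleton_right]
    have h1 := indep_iSup_of_disjoint (fun i => (hXm i).comap_le) hii hdisj
    have h2 : (⨆ i ∈ ({n + 1} : Set ℕ), MeasurableSpace.comap (X i) inferInstance)
        = MeasurableSpace.comap (X (n + 1)) inferInstance := by simp
    have h3 : (⨆ i ∈ {j : ℕ | j ≤ n}, MeasurableSpace.comap (X i) inferInstance) = 𝒢 n := rfl
    rw [h2, h3] at h1
    exact h1.symm
  -- martingale property
  have hcond : ∀ n, F n =ᵐ[P] P[F (n + 1)|𝒢 n] := by
    intro n
    have hle₁ : MeasurableSpace.comap (X (n + 1)) inferInstance ≤ _ := (hXm (n + 1)).comap_le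
    have hsm : StronglyMeasurable[MeasurableSpace.comap (X (n + 1)) inferInstance]
        (g (n + 1)) := by
      have hx : Measurable[MeasurableSpace.comap (X (n + 1)) inferInstance] (X (n + 1)) :=
        measurable_iff_comap_le.mpr le_rfl
      exact (((hx.const_mul ζ).sub_const (c (n + 1))).exp).stronglyMeasurable
    have h1 := condExp_indep_eq hle₁ (𝒢.le n) hsm (hindepG n)
    have h2 : P[F (n + 1)|𝒢 n] =ᵐ[P] F n * P[fun ω => g (n + 1) ω|𝒢 n] := by
      rw [hFrec n]
      exact condExp_mul_of_stronglyMeasurable_left (hadp n)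
        (by rw [← hFrec n]; exact hFint (n + 1)) (hgint (n + 1))
    refine (h2.trans ?_).symm
    filter_upwards [h1] with ω hω
    rw [Pi.mul_apply, hω, hgE (n + 1), mul_one]
  have hmart : Martingale F 𝒢 P := martingale_nat hadp hFint hcond
  have hFnonneg : (0 : ℕ → Ω → ℝ) ≤ F := by
    intro n ω
    exact Finset.prod_nonneg fun i _ => (Real.exp_pos _).le
  -- the threshold
  have hm' : (m : ℝ) ≠ 0 := Nat.cast_ne_zero.mpr (Nat.one_le_iff_ne_zero.mp hm)
  have hνpos : 0 < νbar m := by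
    rw [hνbar]
    apply div_pos
    · exact Finset.sum_pos (fun i _ => by exact_mod_cast hv i)
        (Finset.nonempty_range_iff.mpr (Nat.one_le_iff_ne_zero.mp hm))
    · exact_mod_cast Nat.pos_of_ne_zero (Nat.one_le_iff_ne_zero.mp hm)
  set K : ℝ := (m : ℝ) * ((θ - μbar m) ^ 2 / (2 * νbar m)) with hK
  have hKval : ζ * ((m : ℝ) * θ) - V ζ m = K := by
    rw [hV, hζ, hK]
    field_simp
    ring
  set ε : NNReal := ⟨rexp K, (Real.exp_pos K).le⟩ with hε
  have hεre : (ε : ℝ) = rexp K := rfl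
  -- value of F
  have hFval : ∀ (n : ℕ) (ω : Ω), F n ω
      = rexp (ζ * (∑ i ∈ Finset.range (n + 1), X i ω) - ∑ i ∈ Finset.range (n + 1), c i) := by
    intro n ω
    simp only [hF]
    rw [show ζ * ∑ i ∈ Finset.range (n + 1), X i ω - ∑ i ∈ Finset.range (n + 1), c i
        = ∑ i ∈ Finset.range (n + 1), (ζ * X i ω - c i) by
      rw [Finset.sum_sub_distrib, Finset.mul_sum]]
    rw [Real.exp_sum]
  -- event rewrite
  have hEvent : ∀ (ω : Ω) (n : ℕ), 1 ≤ n →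
      (0 ≤ ζ * ((∑ i ∈ Finset.range n, X i ω) - m * θ) - V ζ n + V ζ m
        ↔ (ε : ℝ) ≤ F (n - 1) ω) := by
    intro ω n hn
    have hn1 : n - 1 + 1 = n := Nat.succ_pred_eq_of_pos hn
    rw [hFval, hn1, hεre, ← hVc n hn, Real.exp_le_exp, ← hKval]
    have hexp : ζ * ((∑ i ∈ Finset.range n, X i ω) - (m : ℝ) * θ)
        = ζ * (∑ i ∈ Finset.range n, X i ω) - ζ * ((m : ℝ) * θ) := by ring
    constructor <;> intro h <;> linarith
  -- Doob sets
  set A : ℕ → Set Ω := fun N =>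
    {ω | (ε : ℝ) ≤ (Finset.range (N + 1)).sup' Finset.nonempty_range_add_one fun k => F k ω}
    with hA
  have hmono : Monotone A := by
    intro a b hab ω hω
    simp only [hA, Set.mem_setOf_eq] at hω ⊢
    refine le_trans hω ?_
    exact Finset.sup'_mono _ (Finset.range_subset_range.mpr (by omega)) Finset.nonempty_range_add_one
  have hsub : {ω | ∃ n : ℕ, 1 ≤ n ∧
      0 ≤ ζ * ((∑ i ∈ Finset.range n, X i ω) - m * θ) - V ζ n + V ζ m} ⊆ ⋃ N, A N := by
    intro ω hω
    obtain ⟨n, hn, h0⟩ := hω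
    refine Set.mem_iUnion.mpr ⟨n - 1, ?_⟩
    show (ε : ℝ) ≤ _
    exact le_trans ((hEvent ω n hn).mp h0)
      (Finset.le_sup' (f := fun k => F k ω) (Finset.self_mem_range_succ (n - 1)))
  have hε0 : (ε : ENNReal) ≠ 0 := by
    simp only [ne_eq, ENNReal.coe_eq_zero]
    exact fun h => (Real.exp_pos K).ne' (congrArg NNReal.toReal h)
  have hAbound : ∀ N, P (A N) ≤ ENNReal.ofReal (rexp (-K)) := by
    intro N
    have h1 := maximal_ineq hmart.submartingale hFnonneg (ε := ε) N
    have h2 : ∫ ω in A N, F N ω ∂P ≤ ∫ ω, F N ω ∂P :=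
      setIntegral_le_integral (hFint N) (ae_of_all _ fun ω => hFnonneg N ω)
    have h3 : (ε : ENNReal) * P (A N) ≤ 1 := by
      refine le_trans ?_ (le_trans (ENNReal.ofReal_le_ofReal h2) ?_)
      · rw [← smul_eq_mul, ← ENNReal.smul_def]
        exact h1
      · rw [hFE N]
        simp
    calc P (A N) = (ε : ENNReal)⁻¹ * ((ε : ENNReal) * P (A N)) := by
          rw [← mul_assoc, ENNReal.inv_mul_cancel hε0 ENNReal.coe_ne_top, one_mul]
      _ ≤ (ε : ENNReal)⁻¹ * 1 := by gcongr
      _ = ENNReal.ofReal (rexp (-K)) := by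
          rw [mul_one, Real.exp_neg,
            ENNReal.ofReal_inv_of_pos (Real.exp_pos K)]
          congr 1
          rw [ENNReal.ofReal_eq_coe_nnreal (Real.exp_pos K).le]
          rfl
  calc P {ω | ∃ n : ℕ, 1 ≤ n ∧
        0 ≤ ζ * ((∑ i ∈ Finset.range n, X i ω) - m * θ) - V ζ n + V ζ m}
      ≤ P (⋃ N, A N) := measure_mono hsub
    _ = ⨆ N, P (A N) := hmono.directed_le.measure_iUnion
    _ ≤ ENNReal.ofReal (rexp (-K)) := iSup_le hAbound
    _ = ENNReal.ofReal ((Real.exp (-(θ - μbar m) ^ 2 / (2 * νbar m))) ^ m) := by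
        congr 1
        rw [← Real.exp_nat_mul]
        congr 1
        rw [hK]
        ring
end

section
/- Let X₁, X₂, … be independent Poisson random variables with E[Xᵢ] = λᵢ > 0 for each i ∈ ℕ. Define Sₙ = Σ_{i=1}^{n} Xᵢ, λ̄ₙ = (1/n) Σ_{i=1}^{n} λᵢ, and 𝒱(s, n) = n λ̄ₙ (e^s − 1) for s ∈ ℝ, n ∈ ℕ. Then for every positive integer m and every θ ∈ (0, ∞), with ζ = ln(θ/λ̄ₘ): Pr{ ∃ n ∈ ℕ, ζ(Sₙ − m θ) − 𝒱(ζ, n) + 𝒱(ζ, m) ≥ 0 } ≤ [ exp( θ − λ̄ₘ + θ·ln(λ̄ₘ/θ) ) ]^m. -/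
open MeasureTheory ProbabilityTheory Real
open scoped ENNReal NNReal

lemma poisson_hassum (r : NNReal) (z : ℝ) :
    HasSum (fun n : ℕ => poissonPMFReal r n * Real.exp (z * n))
      (Real.exp (r * (Real.exp z - 1))) := by
  have h : HasSum (fun n : ℕ => ((r : ℝ) * Real.exp z) ^ n / n.factorial)
      (Real.exp ((r : ℝ) * Real.exp z)) := by
    have h0 := NormedSpace.expSeries_div_hasSum_exp ((r : ℝ) * Real.exp z)
    rwa [← Real.exp_eq_exp_ℝ] at h0
  have h2 := h.mul_left (Real.exp (-(r : ℝ)))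
  have heq : (fun n : ℕ => Real.exp (-(r : ℝ)) * (((r : ℝ) * Real.exp z) ^ n / n.factorial))
      = fun n : ℕ => poissonPMFReal r n * Real.exp (z * n) := by
    funext n
    rw [poissonPMFReal, mul_comm z, Real.exp_nat_mul, mul_pow]
    ring
  rw [heq] at h2
  convert h2 using 1
  · rfl
  rw [← Real.exp_add]
  ring_nf

lemma poisson_integrable (r : NNReal) (z : ℝ) :
    Integrable (fun n : ℕ => Real.exp (z * n)) (poissonMeasure r) := by
  constructor
  · exact (measurable_of_countable _).aestronglyMeasurable
  · rw [hasFiniteIntegral_iff_norm]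
    have : (∫⁻ n : ℕ, ENNReal.ofReal ‖Real.exp (z * n)‖ ∂(poissonMeasure r))
        = ∑' n : ℕ, ENNReal.ofReal (poissonPMFReal r n * Real.exp (z * n)) := by
      rw [lintegral_countable']
      congr 1
      funext n
      rw [Real.norm_eq_abs, abs_of_pos (Real.exp_pos _)]
      rw [poissonMeasure_singleton]
      have : ENNReal.ofReal (Real.exp (-(r : ℝ)) * (r : ℝ) ^ n / n.factorial) = ENNReal.ofReal (poissonPMFReal r n) := rfl
      rw [this, ← ENNReal.ofReal_mul (Real.exp_pos _).le, mul_comm]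
    rw [this, ← ENNReal.ofReal_tsum_of_nonneg
      (fun n => mul_nonneg poissonPMFReal_nonneg (Real.exp_pos _).le)
      (poisson_hassum r z).summable]
    exact ENNReal.ofReal_lt_top

lemma poisson_mgf (r : NNReal) (z : ℝ) :
    ∫ n : ℕ, Real.exp (z * n) ∂(poissonMeasure r) = Real.exp (r * (Real.exp z - 1)) := by
  rw [integral_poissonMeasure]
  rw [← (poisson_hassum r z).tsum_eq]
  congr 1

/-- Uniform inequality for sums of independent Poisson random variables with rates
`λᵢ > 0`: with `λ̄ₙ` the averaged rate, `𝒱(s,n) = n λ̄ₙ (eˢ - 1)` and `ζ = log (θ/λ̄ₘ)`,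
`Pr{∃ n ≥ 1, ζ(Sₙ - mθ) - 𝒱(ζ,n) + 𝒱(ζ,m) ≥ 0}
  ≤ (exp (θ - λ̄ₘ + θ log (λ̄ₘ/θ)))^m`. -/
theorem statement12 {Ω : Type*} [MeasurableSpace Ω] (P : Measure Ω) [IsProbabilityMeasure P]
    (X : ℕ → Ω → ℕ) (hXm : ∀ i, Measurable (X i))
    (hindep : iIndepFun X P)
    (lam : ℕ → NNReal) (hlam : ∀ i, 0 < lam i)
    (hdist : ∀ i, Measure.map (X i) P = poissonMeasure (lam i))
    (lambar : ℕ → ℝ) (hlambar : ∀ n, lambar n = (∑ i ∈ Finset.range n, (lam i : ℝ)) / n)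
    (V : ℝ → ℕ → ℝ)
    (hV : ∀ s n, V s n = n * lambar n * (Real.exp s - 1))
    (m : ℕ) (hm : 1 ≤ m) (θ : ℝ) (hθ : 0 < θ)
    (ζ : ℝ) (hζ : ζ = Real.log (θ / lambar m)) :
    P {ω | ∃ n : ℕ, 1 ≤ n ∧
        0 ≤ ζ * ((∑ i ∈ Finset.range n, (X i ω : ℝ)) - m * θ) - V ζ n + V ζ m}
      ≤ ENNReal.ofReal
        ((Real.exp (θ - lambar m + θ * Real.log (lambar m / θ))) ^ m) := by
  classical
  have hsum_pos : 0 < ∑ i ∈ Finset.range m, (lam i : ℝ) :=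
    Finset.sum_pos (fun i _ => by exact_mod_cast hlam i) ⟨0, Finset.mem_range.mpr hm⟩
  have hmR : (0:ℝ) < m := by exact_mod_cast hm
  have hlm : 0 < lambar m := by rw [hlambar]; positivity
  have hratio : 0 < θ / lambar m := div_pos hθ hlm
  set c : ℕ → ℝ := fun i => Real.exp ((lam i : ℝ) * (Real.exp ζ - 1)) with hcdef
  have hcpos : ∀ i, 0 < c i := fun i => Real.exp_pos _
  set Z : ℕ → Ω → ℝ := fun i ω => Real.exp (ζ * (X i ω : ℝ)) / c i with hZdef
  have hgZ : ∀ i, Measurable (fun n : ℕ => Real.exp (ζ * (n : ℝ)) / c i) :=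
    fun _ => measurable_of_countable _
  have hZmeas : ∀ i, Measurable (Z i) := fun i => (hgZ i).comp (hXm i)
  have hYint : ∀ i, Integrable (fun ω => Real.exp (ζ * (X i ω : ℝ))) P := by
    intro i
    have h1 : Integrable (fun n : ℕ => Real.exp (ζ * (n : ℝ))) (Measure.map (X i) P) := by
      rw [hdist]; exact poisson_integrable _ _
    exact (integrable_map_measure (measurable_of_countable _).aestronglyMeasurable
      (hXm i).aemeasurable).mp h1
  have hYmean : ∀ i, ∫ ω, Real.exp (ζ * (X i ω : ℝ)) ∂P = c i := by
    intro i
    have h1 : ∫ ω, Real.exp (ζ * (X i ω : ℝ)) ∂P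
        = ∫ n : ℕ, Real.exp (ζ * (n : ℝ)) ∂(Measure.map (X i) P) :=
      (integral_map (f := fun n : ℕ => Real.exp (ζ * (n : ℝ))) (hXm i).aemeasurable
        (measurable_of_countable _).aestronglyMeasurable).symm
    rw [h1, hdist, poisson_mgf]
  have hZint : ∀ i, Integrable (Z i) P := fun i => (hYint i).div_const _
  have hZmean : ∀ i, P[Z i] = 1 := by
    intro i
    have : P[Z i] = (∫ ω, Real.exp (ζ * (X i ω : ℝ)) ∂P) / c i := by
      rw [← integral_div]
    rw [this, hYmean, div_self (hcpos i).ne']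
  have hZindep : iIndepFun Z P :=
    hindep.comp (fun i n => Real.exp (ζ * (n : ℝ)) / c i) hgZ
  set W : ℕ → Ω → ℝ := fun k => ∏ i ∈ Finset.range k, Z i with hWdef
  have hWsucc : ∀ k, W (k + 1) = W k * Z k := by
    intro k; simp only [hWdef]; exact Finset.prod_range_succ Z k
  have hWval : ∀ (k : ℕ) (ω : Ω), W k ω
      = Real.exp (ζ * (∑ i ∈ Finset.range k, (X i ω : ℝ))
        - (∑ i ∈ Finset.range k, (lam i : ℝ)) * (Real.exp ζ - 1)) := by
    intro k ω
    simp only [hWdef, hZdef, hcdef, Finset.prod_apply]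
    rw [Finset.prod_div_distrib, ← Real.exp_sum, ← Real.exp_sum, ← Real.exp_sub]
    congr 1
    rw [Finset.mul_sum, Finset.sum_mul]
  have hWpos : ∀ k ω, 0 < W k ω := by
    intro k ω; rw [hWval]; exact Real.exp_pos _
  have hWint : ∀ k, Integrable (W k) P ∧ P[W k] = 1 := by
    intro k
    induction k with
    | zero =>
      constructor
      · simp only [hWdef, Finset.range_zero, Finset.prod_empty]
        exact integrable_const 1
      · simp only [hWdef, Finset.range_zero, Finset.prod_empty]
        simp [integral_const]
    | succ n ih =>
      have hind : IndepFun (W n) (Z n) P := by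
        simp only [hWdef]
        exact hZindep.indepFun_prod_range_succ hZmeas n
      rw [hWsucc n]
      exact ⟨hind.integrable_mul ih.1 (hZint n),
        by rw [hind.integral_mul_eq_mul_integral ih.1.aestronglyMeasurable (hZint n).aestronglyMeasurable, ih.2, hZmean n, mul_one]⟩
  -- filtration and martingale
  have hXsm : ∀ i, StronglyMeasurable (X i) := fun i => (hXm i).stronglyMeasurable
  set 𝒢 := Filtration.natural X hXsm with h𝒢
  have hZcm : ∀ i, StronglyMeasurable[MeasurableSpace.comap (X i) inferInstance] (Z i) := by
    intro i
    have hXi : Measurable[MeasurableSpace.comap (X i) inferInstance] (X i) :=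
      fun s hs => ⟨s, hs, rfl⟩
    exact ((hgZ i).comp hXi).stronglyMeasurable
  have hcomap_le : ∀ i n, i ≤ n → MeasurableSpace.comap (X i) inferInstance ≤ 𝒢 n := by
    intro i n hin
    exact le_iSup₂ (f := fun j (_ : j ≤ n) => MeasurableSpace.comap (X j) inferInstance) i hin
  set f : ℕ → Ω → ℝ := fun n => W (n + 1) with hfdef
  have hfadp : StronglyAdapted 𝒢 f := by
    intro n
    refine Finset.stronglyMeasurable_prod _ (fun i hi => ?_)
    exact (hZcm i).mono (hcomap_le i n (Nat.lt_succ_iff.mp (Finset.mem_range.mp hi)))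
  have hmart : Martingale f 𝒢 P := by
    refine martingale_nat hfadp (fun n => (hWint (n + 1)).1) (fun n => ?_)
    have hind2 : Indep (MeasurableSpace.comap (X (n + 1)) inferInstance) (𝒢 n) P := by
      have h := indep_iSup_of_disjoint
        (m := fun k => MeasurableSpace.comap (X k) inferInstance)
        (fun k => (hXm k).comap_le) hindep
        (S := {n + 1}) (T := {k | k ≤ n}) (by simp)
      rw [iSup_singleton] at h
      exact h
    have h2 : P[Z (n + 1)|𝒢 n] =ᵐ[P] fun _ => P[Z (n + 1)] :=
      condExp_indep_eq (hXm (n + 1)).comap_le (𝒢.le n) (hZcm (n + 1)) hind2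
    have hps : f (n + 1) = f n * Z (n + 1) := hWsucc (n + 1)
    rw [hps]
    have h1 : P[f n * Z (n + 1)|𝒢 n] =ᵐ[P] f n * P[Z (n + 1)|𝒢 n] :=
      condExp_mul_of_stronglyMeasurable_left (hfadp n)
        (by rw [← hps]; exact (hWint (n + 2)).1) (hZint (n + 1))
    refine Filter.EventuallyEq.symm (h1.trans ?_)
    refine (Filter.EventuallyEq.rfl.mul h2).trans ?_
    rw [hZmean (n + 1)]
    filter_upwards with ω
    simp
  have hfnonneg : (0 : ℕ → Ω → ℝ) ≤ f := fun n ω => (hWpos (n + 1) ω).le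
  -- the threshold
  set a : ℝ := Real.exp (ζ * (m * θ) - V ζ m) with hadef
  have hapos : 0 < a := Real.exp_pos _
  set ε : NNReal := a.toNNReal with hεdef
  have hεcoe : (ε : ℝ) = a := Real.coe_toNNReal a hapos.le
  set A : ℕ → Set Ω := fun N =>
    {ω | (ε : ℝ) ≤ (Finset.range (N + 1)).sup' Finset.nonempty_range_add_one fun k => f k ω}
    with hAdef
  have hkey : ∀ N, P (A N) ≤ (ε : ℝ≥0∞)⁻¹ := by
    intro N
    have h1 := maximal_ineq hmart.submartingale hfnonneg (ε := ε) N
    have h2 : ENNReal.ofReal (∫ ω in A N, f N ω ∂P) ≤ 1 := by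
      have h3 : ∫ ω in A N, f N ω ∂P ≤ ∫ ω, f N ω ∂P :=
        setIntegral_le_integral (hWint (N + 1)).1 (ae_of_all _ fun ω => (hWpos (N + 1) ω).le)
      refine le_trans (ENNReal.ofReal_le_ofReal h3) ?_
      have : ∫ ω, f N ω ∂P = 1 := (hWint (N + 1)).2
      rw [this]; simp
    have h4 : (ε : ℝ≥0∞) * P (A N) ≤ 1 := le_trans h1 h2
    rw [ENNReal.le_inv_iff_mul_le, mul_comm]
    exact h4
  have hmono : Monotone A := by
    intro N M hNM ω hω
    have hsub : Finset.range (N + 1) ⊆ Finset.range (M + 1) :=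
      Finset.range_subset_range.mpr (by omega)
    exact le_trans hω (Finset.sup'_mono (fun k => f k ω) hsub Finset.nonempty_range_add_one)
  have hVeq : ∀ k : ℕ, V ζ k = (∑ i ∈ Finset.range k, (lam i : ℝ)) * (Real.exp ζ - 1) := by
    intro k
    rw [hV, hlambar]
    rcases Nat.eq_zero_or_pos k with hk | hk
    · subst hk; simp
    · have hk0 : (k : ℝ) ≠ 0 := Nat.cast_ne_zero.mpr hk.ne'
      field_simp
  have hWvalV : ∀ (k : ℕ) (ω : Ω), W k ω
      = Real.exp (ζ * (∑ i ∈ Finset.range k, (X i ω : ℝ)) - V ζ k) := by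
    intro k ω; rw [hWval, hVeq]
  have hsubset : {ω | ∃ n : ℕ, 1 ≤ n ∧
      0 ≤ ζ * ((∑ i ∈ Finset.range n, (X i ω : ℝ)) - m * θ) - V ζ n + V ζ m}
      ⊆ ⋃ N, A N := by
    intro ω hω
    obtain ⟨n, hn1, hn⟩ := hω
    refine Set.mem_iUnion.mpr ⟨n - 1, ?_⟩
    have hn' : n - 1 + 1 = n := Nat.succ_pred_eq_of_pos hn1
    have hfn : a ≤ f (n - 1) ω := by
      have hval : f (n - 1) ω = Real.exp (ζ * (∑ i ∈ Finset.range n, (X i ω : ℝ)) - V ζ n) := by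
        simp only [hfdef, hn']
        exact hWvalV n ω
      rw [hval, hadef, Real.exp_le_exp]
      nlinarith [hn]
    show (ε : ℝ) ≤ (Finset.range (n - 1 + 1)).sup' Finset.nonempty_range_add_one fun k => f k ω
    rw [hεcoe]
    exact le_trans hfn (Finset.le_sup' (fun k => f k ω) (Finset.mem_range.mpr (Nat.lt_succ_self _)))
  have hεinv : (ε : ℝ≥0∞)⁻¹
      = ENNReal.ofReal ((Real.exp (θ - lambar m + θ * Real.log (lambar m / θ))) ^ m) := by
    have hεE : (ε : ℝ≥0∞) = ENNReal.ofReal a := rfl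
    rw [hεE, ← ENNReal.ofReal_inv_of_pos hapos]
    congr 1
    have hVm : V ζ m = m * (θ - lambar m) := by
      rw [hV, hζ, Real.exp_log hratio]
      field_simp
    have hζ' : ζ = -Real.log (lambar m / θ) := by
      rw [hζ, ← Real.log_inv, inv_div]
    have hexp : a⁻¹ = Real.exp (V ζ m - ζ * (m * θ)) := by
      rw [hadef, ← Real.exp_neg]
      ring_nf
    rw [hexp, ← Real.exp_nat_mul]
    congr 1
    rw [hVm, hζ']
    ring
  calc P {ω | ∃ n : ℕ, 1 ≤ n ∧
        0 ≤ ζ * ((∑ i ∈ Finset.range n, (X i ω : ℝ)) - m * θ) - V ζ n + V ζ m}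
      ≤ P (⋃ N, A N) := measure_mono hsubset
    _ = ⨆ N, P (A N) := Directed.measure_iUnion hmono.directed_le
    _ ≤ (ε : ℝ≥0∞)⁻¹ := iSup_le hkey
    _ = _ := hεinv
end

section
/- Let {X_k : k = 0, 1, 2, …} be a martingale taking values in ℝ^d (with respect to some filtration), and suppose Pr{ ‖X_k − X_{k−1}‖ ≤ c_k } = 1 for every k ∈ ℕ, where c_k > 0. Then for every positive integer n and every ε > 0: Pr{ ‖Xₙ − X₀‖ ≥ ε } ≤ 2·exp( −2 ε² / (5 Σ_{k=1}^{n} c_k²) ). -/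
open MeasureTheory ProbabilityTheory

open Real RealInnerProductSpace


lemma sinh_le_mul_cosh {x : ℝ} (hx : 0 ≤ x) : Real.sinh x ≤ x * Real.cosh x := by
  have hmono : MonotoneOn (fun x => x * Real.cosh x - Real.sinh x) (Set.Ici 0) := by
    apply monotoneOn_of_deriv_nonneg (convex_Ici 0)
    · fun_prop
    · intro x hx
      exact (((hasDerivAt_id x).mul (Real.hasDerivAt_cosh x)).sub
        (Real.hasDerivAt_sinh x)).differentiableAt.differentiableWithinAt
    · intro x hx
      rw [interior_Ici] at hx
      have : HasDerivAt (fun x => x * Real.cosh x - Real.sinh x)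
          (1 * Real.cosh x + x * Real.sinh x - Real.cosh x) x :=
        ((hasDerivAt_id x).mul (Real.hasDerivAt_cosh x)).sub (Real.hasDerivAt_sinh x)
      rw [this.deriv]
      have h1 : (0:ℝ) ≤ Real.sinh x := Real.sinh_nonneg_iff.2 (Set.mem_Ioi.1 hx).le
      have h2 : (0:ℝ) ≤ x * Real.sinh x := mul_nonneg (Set.mem_Ioi.1 hx).le h1
      linarith
  have := hmono (Set.self_mem_Ici) (Set.mem_Ici.2 hx) hx
  simpa using this

lemma convexOn_cosh_sqrt : ConvexOn ℝ (Set.Ici 0) (fun s => Real.cosh (Real.sqrt s)) := by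
  apply convexOn_of_hasDerivWithinAt2_nonneg (convex_Ici 0)
    (f' := fun s => Real.sinh (Real.sqrt s) / (2 * Real.sqrt s))
    (f'' := fun s => (Real.cosh (Real.sqrt s) - Real.sinh (Real.sqrt s) / Real.sqrt s) / (4 * s))
  · fun_prop
  · intro x hx
    rw [interior_Ici] at hx
    have hs : HasDerivAt Real.sqrt (1 / (2 * Real.sqrt x)) x := Real.hasDerivAt_sqrt (ne_of_gt hx)
    have h : HasDerivAt (fun s => Real.cosh (Real.sqrt s))
        (Real.sinh (Real.sqrt x) * (1 / (2 * Real.sqrt x))) x :=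
      (Real.hasDerivAt_cosh (Real.sqrt x)).comp x hs
    rw [mul_one_div] at h
    exact h.hasDerivWithinAt
  · intro x hx
    rw [interior_Ici] at hx
    have hsq : 0 < Real.sqrt x := Real.sqrt_pos.2 hx
    have hs : HasDerivAt Real.sqrt (1 / (2 * Real.sqrt x)) x := Real.hasDerivAt_sqrt (ne_of_gt hx)
    have hnum : HasDerivAt (fun s => Real.sinh (Real.sqrt s))
        (Real.cosh (Real.sqrt x) * (1 / (2 * Real.sqrt x))) x :=
      (Real.hasDerivAt_sinh (Real.sqrt x)).comp x hs
    have hden : HasDerivAt (fun s => 2 * Real.sqrt s) (2 * (1 / (2 * Real.sqrt x))) x :=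
      hs.const_mul 2
    have hden0 : (2 : ℝ) * Real.sqrt x ≠ 0 := by positivity
    have := hnum.div hden hden0
    refine this.hasDerivWithinAt.congr_deriv ?_
    have hx' : x ≠ 0 := ne_of_gt hx
    have hsx : Real.sqrt x * Real.sqrt x = x := Real.mul_self_sqrt hx.le
    set s := Real.sqrt x with hs_def
    have hs0 : s ≠ 0 := ne_of_gt hsq
    rw [← hsx]
    field_simp
    ring
  · intro x hx
    rw [interior_Ici] at hx
    have hsq : 0 < Real.sqrt x := Real.sqrt_pos.2 hx
    have h1 : Real.sinh (Real.sqrt x) / Real.sqrt x ≤ Real.cosh (Real.sqrt x) := by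
      rw [div_le_iff₀ hsq]
      have := sinh_le_mul_cosh hsq.le
      linarith [this]
    have hx0 : (0:ℝ) < x := hx
    apply div_nonneg (by linarith) (by linarith)

open RealInnerProductSpace in
lemma key_pointwise {F : Type*} [NormedAddCommGroup F] [InnerProductSpace ℝ F]
    (L c : ℝ) (hL : 0 ≤ L) (hc : 0 < c) (y ξ : F) (hξ : ‖ξ‖ ≤ c) :
    Real.cosh (L * ‖y + ξ‖) ≤
      Real.cosh (L * ‖y‖) * Real.cosh (L * c) +
        (⟪y, ξ⟫ / (‖y‖ * c)) * (Real.sinh (L * ‖y‖) * Real.sinh (L * c)) := by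
  rcases eq_or_ne y 0 with hy | hy
  · have hξ0 : 0 ≤ ‖ξ‖ := norm_nonneg _
    simp only [hy, zero_add, norm_zero, mul_zero, Real.cosh_zero, one_mul,
      inner_zero_left, zero_div, zero_mul, add_zero]
    exact Real.cosh_le_cosh.2 (by
      rw [abs_of_nonneg (by positivity), abs_of_nonneg (by positivity)]
      exact mul_le_mul_of_nonneg_left hξ hL)
  · have hr : 0 < ‖y‖ := norm_pos_iff.2 hy
    set r := ‖y‖ with hrdef
    set a := L * r with hadef
    set b := L * c with hbdef
    set t := (⟪y, ξ⟫) with htdef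
    set w := t / (r * c) with hwdef
    have hrc : 0 < r * c := mul_pos hr hc
    have htle : |t| ≤ r * c :=
      le_trans (abs_real_inner_le_norm y ξ) (mul_le_mul_of_nonneg_left hξ hr.le)
    have hw1 : |w| ≤ 1 := by
      rw [hwdef, abs_div, abs_of_pos hrc, div_le_one hrc]; exact htle
    have hμ0 : 0 ≤ (1 - w) / 2 := by
      have := abs_le.1 hw1; linarith [this.2]
    have hν0 : 0 ≤ (1 + w) / 2 := by
      have := abs_le.1 hw1; linarith [this.1]
    have hsum : (1 - w) / 2 + (1 + w) / 2 = 1 := by ring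
    have hval : ((1 - w)/2) * (a - b)^2 + ((1 + w)/2) * (a + b)^2
        = L^2*r^2 + L^2*c^2 + 2*L^2*t := by
      rw [hwdef, hadef, hbdef]; field_simp; ring
    have hkey : L * ‖y + ξ‖ ≤
        Real.sqrt (((1 - w)/2) * (a - b)^2 + ((1 + w)/2) * (a + b)^2) := by
      apply Real.le_sqrt_of_sq_le
      rw [hval]
      have hexp : ‖y + ξ‖ ^ 2 = r^2 + 2*t + ‖ξ‖^2 := by
        rw [hrdef, htdef]; rw [norm_add_sq_real]
      have hξ2 : ‖ξ‖^2 ≤ c^2 := by nlinarith [norm_nonneg ξ]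
      have : (L * ‖y + ξ‖)^2 = L^2 * (r^2 + 2*t + ‖ξ‖^2) := by rw [← hexp]; ring
      rw [this]
      nlinarith [sq_nonneg L]
    have hcvx := convexOn_cosh_sqrt.2 (Set.mem_Ici.2 (sq_nonneg (a - b)))
      (Set.mem_Ici.2 (sq_nonneg (a + b))) hμ0 hν0 hsum
    simp only [smul_eq_mul] at hcvx
    have hsqrt1 : Real.cosh (Real.sqrt ((a - b)^2)) = Real.cosh (a - b) := by
      rw [Real.sqrt_sq_eq_abs, Real.cosh_abs]
    have hsqrt2 : Real.cosh (Real.sqrt ((a + b)^2)) = Real.cosh (a + b) := by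
      rw [Real.sqrt_sq_eq_abs, Real.cosh_abs]
    calc Real.cosh (L * ‖y + ξ‖)
        ≤ Real.cosh (Real.sqrt (((1 - w)/2) * (a - b)^2 + ((1 + w)/2) * (a + b)^2)) := by
          apply Real.cosh_le_cosh.2
          rw [abs_of_nonneg (by positivity), abs_of_nonneg (Real.sqrt_nonneg _)]
          exact hkey
      _ ≤ ((1 - w)/2) * Real.cosh (a - b) + ((1 + w)/2) * Real.cosh (a + b) := by
          rw [← hsqrt1, ← hsqrt2]; exact hcvx
      _ = Real.cosh a * Real.cosh b + w * (Real.sinh a * Real.sinh b) := by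
          rw [Real.cosh_sub, Real.cosh_add]; ring

lemma condexp_clm_comp {α E F' : Type*} [NormedAddCommGroup E] [NormedSpace ℝ E] [CompleteSpace E]
    [NormedAddCommGroup F'] [NormedSpace ℝ F'] [CompleteSpace F']
    {m m0 : MeasurableSpace α} (hm : m ≤ m0) {μ : Measure α} [IsFiniteMeasure μ]
    (T : E →L[ℝ] F') {f : α → E} (hf : Integrable f μ) :
    (fun ω => T ((μ[f|m]) ω)) =ᵐ[μ] μ[fun ω => T (f ω)|m] := by
  haveI : SigmaFinite (μ.trim hm) := inferInstance
  refine ae_eq_condExp_of_forall_setIntegral_eq hm (T.integrable_comp hf) ?_ ?_ ?_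
  · intro s _ _
    exact (T.integrable_comp integrable_condExp).integrableOn
  · intro s hs hμs
    rw [T.integral_comp_comm integrable_condExp.integrableOn,
      setIntegral_condExp hm hf hs, ← T.integral_comp_comm hf.integrableOn]
  · exact T.continuous.comp_aestronglyMeasurable
      (StronglyMeasurable.aestronglyMeasurable stronglyMeasurable_condExp)

lemma coord_abs_le_norm {d : ℕ} (x : EuclideanSpace ℝ (Fin d)) (i : Fin d) : |x i| ≤ ‖x‖ := by
  rw [EuclideanSpace.norm_eq, ← Real.sqrt_sq_eq_abs]
  apply Real.sqrt_le_sqrt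
  have : |x i| ^ 2 ≤ ∑ j, ‖x j‖ ^ 2 := by
    have := Finset.single_le_sum (f := fun j => ‖x j‖ ^ 2)
      (fun j _ => sq_nonneg _) (Finset.mem_univ i)
    simpa [Real.norm_eq_abs, sq_abs] using this
  simpa [sq_abs] using this

/-- Azuma-type inequality for vector-valued martingales with bounded increments
`‖X_k - X_{k-1}‖ ≤ c_k` a.s.: for every `n ≥ 1` and `ε > 0`,
`Pr{‖Xₙ - X₀‖ ≥ ε} ≤ 2 exp (-2ε²/(5 ∑_{k=1}^n c_k²))`. -/
theorem statement17 {d : ℕ} {Ω : Type*} {m0 : MeasurableSpace Ω} (P : Measure Ω)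
    [IsProbabilityMeasure P] (ℱ : Filtration ℕ m0)
    (X : ℕ → Ω → EuclideanSpace ℝ (Fin d)) (hX : Martingale X ℱ P)
    (c : ℕ → ℝ) (hc : ∀ k : ℕ, 1 ≤ k → 0 < c k)
    (hbd : ∀ k : ℕ, 1 ≤ k → ∀ᵐ ω ∂P, ‖X k ω - X (k - 1) ω‖ ≤ c k)
    (n : ℕ) (hn : 1 ≤ n) (ε : ℝ) (hε : 0 < ε) :
    P {ω | ε ≤ ‖X n ω - X 0 ω‖} ≤
      ENNReal.ofReal
        (2 * Real.exp (-(2 * ε ^ 2) / (5 * ∑ k ∈ Finset.Icc 1 n, (c k) ^ 2))) := by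
  classical
  set S : ℝ := ∑ k ∈ Finset.Icc 1 n, (c k) ^ 2 with hSdef
  have hS : 0 < S := Finset.sum_pos
    (fun k hk => pow_pos (hc k (Finset.mem_Icc.1 hk).1) 2)
    ⟨1, Finset.mem_Icc.2 ⟨le_rfl, hn⟩⟩
  set L : ℝ := ε / S with hLdef
  have hL : 0 < L := div_pos hε hS
  have hSM : ∀ k, StronglyMeasurable (X k) := fun k => (hX.stronglyAdapted k).mono (ℱ.le k)
  have hYSM : ∀ k, StronglyMeasurable (fun ω => X k ω - X 0 ω) :=
    fun k => (hSM k).sub (hSM 0)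
  set B : ℕ → ℝ := fun k => ∑ j ∈ Finset.Icc 1 k, c j with hBdef
  have hB0 : ∀ k, 0 ≤ B k := fun k =>
    Finset.sum_nonneg (fun j hj => (hc j (Finset.mem_Icc.1 hj).1).le)
  have hbound : ∀ k, ∀ᵐ ω ∂P, ‖X k ω - X 0 ω‖ ≤ B k := by
    intro k
    induction k with
    | zero => refine ae_of_all _ fun ω => ?_; simp [hBdef]
    | succ k ih =>
      have hb := hbd (k + 1) (Nat.le_add_left 1 k)
      filter_upwards [ih, hb] with ω h1 h2
      have hdec : X (k+1) ω - X 0 ω = (X (k+1) ω - X k ω) + (X k ω - X 0 ω) := by abel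
      have h2' : ‖X (k+1) ω - X k ω‖ ≤ c (k+1) := by simpa using h2
      have hBk : B (k+1) = B k + c (k+1) := by
        simp only [hBdef]
        exact Finset.sum_Icc_succ_top (Nat.le_add_left 1 k) c
      rw [hdec, hBk]
      calc ‖(X (k+1) ω - X k ω) + (X k ω - X 0 ω)‖
          ≤ ‖X (k+1) ω - X k ω‖ + ‖X k ω - X 0 ω‖ := norm_add_le _ _
        _ ≤ B k + c (k+1) := by linarith
  have hint : ∀ k, Integrable (fun ω => Real.cosh (L * ‖X k ω - X 0 ω‖)) P := by
    intro k
    refine Integrable.mono' (integrable_const (Real.cosh (L * B k))) ?_ ?_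
    · exact (Real.continuous_cosh.comp_stronglyMeasurable
        ((hYSM k).norm.const_mul L)).aestronglyMeasurable
    · filter_upwards [hbound k] with ω h
      rw [Real.norm_eq_abs, abs_of_pos (Real.cosh_pos _)]
      apply Real.cosh_le_cosh.2
      rw [abs_of_nonneg (by positivity), abs_of_nonneg (mul_nonneg hL.le (hB0 k))]
      exact mul_le_mul_of_nonneg_left h hL.le
  -- key induction
  have hkey : ∀ k, ∫ ω, Real.cosh (L * ‖X k ω - X 0 ω‖) ∂P ≤
      ∏ j ∈ Finset.Icc 1 k, Real.cosh (L * c j) := by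
    intro k
    induction k with
    | zero =>
      have h0 : ∀ ω, Real.cosh (L * ‖X 0 ω - X 0 ω‖) = 1 := fun ω => by simp
      simp only [h0, integral_const, measure_univ, ENNReal.toReal_one, probReal_univ, smul_eq_mul, mul_one]
      rw [show Finset.Icc 1 0 = (∅ : Finset ℕ) from rfl, Finset.prod_empty]
    | succ k ih =>
      have hck0 : 0 < c (k+1) := hc (k+1) (Nat.le_add_left 1 k)
      have hm : (ℱ k) ≤ m0 := ℱ.le k
      set Y : Ω → EuclideanSpace ℝ (Fin d) := fun ω => X k ω - X 0 ω with hYdef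
      set ξ : Ω → EuclideanSpace ℝ (Fin d) := fun ω => X (k+1) ω - X k ω with hξdef
      have hξbd : ∀ᵐ ω ∂P, ‖ξ ω‖ ≤ c (k+1) := by
        have := hbd (k+1) (Nat.le_add_left 1 k)
        simpa using this
      have hξint : Integrable ξ P := (hX.integrable (k+1)).sub (hX.integrable k)
      have hcond : P[ξ | ℱ k] =ᵐ[P] 0 := by
        have h1 := hX.condExp_ae_eq (Nat.le_succ k)
        have h2 : P[X k | ℱ k] = X k :=
          condExp_of_stronglyMeasurable hm (hX.stronglyAdapted k) (hX.integrable k)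
        have h3 := condExp_sub (μ := P) (m := ℱ k) (hX.integrable (k+1)) (hX.integrable k)
        refine h3.trans ?_
        filter_upwards [h1] with ω hω
        simp [Pi.sub_apply, hω, h2]
      set V : Ω → EuclideanSpace ℝ (Fin d) := fun ω =>
        (Real.sinh (L * ‖Y ω‖) * Real.sinh (L * c (k+1)) / (‖Y ω‖ * c (k+1))) • Y ω with hVdef
      have hYSMk : StronglyMeasurable[ℱ k] Y :=
        (hX.stronglyAdapted k).sub ((hX.stronglyAdapted 0).mono (ℱ.mono (Nat.zero_le k)))
      have hVSM : StronglyMeasurable[ℱ k] V := by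
        refine StronglyMeasurable.smul (f := fun ω => Real.sinh (L * ‖Y ω‖) * Real.sinh (L * c (k+1)) / (‖Y ω‖ * c (k+1))) ?_ hYSMk
        have h1 : StronglyMeasurable[ℱ k] (fun ω => ‖Y ω‖) := hYSMk.norm
        have hg : Measurable (fun r : ℝ =>
            Real.sinh (L * r) * Real.sinh (L * c (k+1)) / (r * c (k+1))) := by
          apply Measurable.div
          · exact ((Real.measurable_sinh.comp (measurable_const.mul measurable_id)).mul
              measurable_const)
          · exact measurable_id.mul measurable_const
        exact (hg.comp h1.measurable).stronglyMeasurable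
      set M : ℝ := Real.sinh (L * B k) * Real.sinh (L * c (k+1)) / c (k+1) with hMdef
      have hsinh_ck : 0 ≤ Real.sinh (L * c (k+1)) :=
        Real.sinh_nonneg_iff.2 (by positivity)
      have hM0 : 0 ≤ M := by
        apply div_nonneg _ hck0.le
        exact mul_nonneg (Real.sinh_nonneg_iff.2 (mul_nonneg hL.le (hB0 k))) hsinh_ck
      have hVbd : ∀ᵐ ω ∂P, ‖V ω‖ ≤ M := by
        filter_upwards [hbound k] with ω h
        rw [hVdef, norm_smul]
        rcases eq_or_lt_of_le (norm_nonneg (Y ω)) with h0 | h0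
        · rw [← h0, mul_zero]; exact hM0
        · have hsinhY : 0 ≤ Real.sinh (L * ‖Y ω‖) :=
            Real.sinh_nonneg_iff.2 (by positivity)
          rw [Real.norm_eq_abs, abs_of_nonneg (div_nonneg (mul_nonneg hsinhY hsinh_ck)
            (by positivity))]
          have heq : Real.sinh (L * ‖Y ω‖) * Real.sinh (L * c (k+1)) / (‖Y ω‖ * c (k+1))
              * ‖Y ω‖ = Real.sinh (L * ‖Y ω‖) * Real.sinh (L * c (k+1)) / c (k+1) := by
            field_simp
          rw [heq, hMdef]
          have hYB : ‖Y ω‖ ≤ B k := h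
          have : Real.sinh (L * ‖Y ω‖) ≤ Real.sinh (L * B k) :=
            Real.sinh_le_sinh.2 (mul_le_mul_of_nonneg_left hYB hL.le)
          exact (div_le_div_iff_of_pos_right hck0).2 (mul_le_mul_of_nonneg_right this hsinh_ck)
      have hξSM : StronglyMeasurable ξ := (hSM (k+1)).sub (hSM k)
      have hcond_i : ∀ i : Fin d, P[fun ω => ξ ω i | ℱ k] =ᵐ[P] 0 := by
        intro i
        have h1 := (condexp_clm_comp hm (EuclideanSpace.proj i (𝕜 := ℝ)) hξint).symm
        refine h1.trans ?_
        filter_upwards [hcond] with ω hω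
        simp [hω]
      have hVi_SM : ∀ i : Fin d, StronglyMeasurable[ℱ k] (fun ω => V ω i) := fun i =>
        (EuclideanSpace.proj i (𝕜 := ℝ)).continuous.comp_stronglyMeasurable hVSM
      have hVi_bd : ∀ i : Fin d, ∀ᵐ ω ∂P, ‖V ω i‖ ≤ M := by
        intro i
        filter_upwards [hVbd] with ω h
        exact le_trans (coord_abs_le_norm (V ω) i) h
      have hξi_int : ∀ i : Fin d, Integrable (fun ω => ξ ω i) P := fun i =>
        (EuclideanSpace.proj i (𝕜 := ℝ)).integrable_comp hξint
      have hprod_int : ∀ i : Fin d, Integrable (fun ω => V ω i * ξ ω i) P := by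
        intro i
        refine Integrable.mono' (integrable_const (M * c (k+1))) ?_ ?_
        · exact (((hVi_SM i).mono hm).mul
            ((EuclideanSpace.proj i (𝕜 := ℝ)).continuous.comp_stronglyMeasurable
              hξSM)).aestronglyMeasurable
        · filter_upwards [hVi_bd i, hξbd] with ω h1 h2
          rw [Real.norm_eq_abs, abs_mul]
          have h2' : |ξ ω i| ≤ c (k+1) := le_trans (coord_abs_le_norm (ξ ω) i) h2
          exact mul_le_mul h1 h2' (abs_nonneg _) hM0
      have hinner_eq : ∀ ω, (⟪V ω, ξ ω⟫ : ℝ) = ∑ i, V ω i * ξ ω i := by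
        intro ω
        simp [PiLp.inner_apply, RCLike.inner_apply, conj_trivial, mul_comm]
      have hZint : Integrable (fun ω => (⟪V ω, ξ ω⟫ : ℝ)) P := by
        simp only [hinner_eq]
        exact integrable_finset_sum _ (fun i _ => hprod_int i)
      have hZzero : ∫ ω, (⟪V ω, ξ ω⟫ : ℝ) ∂P = 0 := by
        simp only [hinner_eq]
        rw [integral_finset_sum _ (fun i _ => hprod_int i)]
        apply Finset.sum_eq_zero
        intro i _
        have hmul := condExp_stronglyMeasurable_mul_of_bound hm (hVi_SM i) (hξi_int i) M
          (hVi_bd i)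
        have hrw : ∫ ω, V ω i * ξ ω i ∂P
            = ∫ ω, (P[fun ω => V ω i * ξ ω i | ℱ k]) ω ∂P :=
          (integral_condExp hm).symm
        rw [hrw]
        have hzero : (P[fun ω => V ω i * ξ ω i | ℱ k]) =ᵐ[P] 0 := by
          refine hmul.trans ?_
          filter_upwards [hcond_i i] with ω hω
          simp only [Pi.mul_apply, hω, Pi.zero_apply, mul_zero]
        rw [integral_congr_ae hzero]; simp
      have hstep : ∫ ω, Real.cosh (L * ‖X (k+1) ω - X 0 ω‖) ∂P ≤
          Real.cosh (L * c (k+1)) * ∫ ω, Real.cosh (L * ‖Y ω‖) ∂P := by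
        have hptwise : ∀ᵐ ω ∂P, Real.cosh (L * ‖X (k+1) ω - X 0 ω‖) ≤
            Real.cosh (L * ‖Y ω‖) * Real.cosh (L * c (k+1)) + (⟪V ω, ξ ω⟫ : ℝ) := by
          filter_upwards [hξbd] with ω hω
          have hdecomp : X (k+1) ω - X 0 ω = Y ω + ξ ω := by
            rw [hYdef, hξdef]; exact (sub_add_sub_cancel' _ _ _).symm
          have hkp := key_pointwise L (c (k+1)) hL.le hck0 (Y ω) (ξ ω) hω
          have hV : (⟪V ω, ξ ω⟫ : ℝ) = ((⟪Y ω, ξ ω⟫ : ℝ) / (‖Y ω‖ * c (k+1))) *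
              (Real.sinh (L * ‖Y ω‖) * Real.sinh (L * c (k+1))) := by
            rw [hVdef]
            simp only [real_inner_smul_left]
            ring
          rw [hdecomp, hV]
          exact hkp
        have hint2 : Integrable (fun ω =>
            Real.cosh (L * ‖Y ω‖) * Real.cosh (L * c (k+1)) + (⟪V ω, ξ ω⟫ : ℝ)) P :=
          ((hint k).mul_const _).add hZint
        calc ∫ ω, Real.cosh (L * ‖X (k+1) ω - X 0 ω‖) ∂P
            ≤ ∫ ω, (Real.cosh (L * ‖Y ω‖) * Real.cosh (L * c (k+1))
                + (⟪V ω, ξ ω⟫ : ℝ)) ∂P :=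
              integral_mono_ae (hint (k+1)) hint2 hptwise
          _ = (∫ ω, Real.cosh (L * ‖Y ω‖) ∂P) * Real.cosh (L * c (k+1))
              + ∫ ω, (⟪V ω, ξ ω⟫ : ℝ) ∂P := by
              rw [integral_add ((hint k).mul_const _) hZint, integral_mul_const]
          _ = Real.cosh (L * c (k+1)) * ∫ ω, Real.cosh (L * ‖Y ω‖) ∂P := by
              rw [hZzero]; ring
      have hprodstep : ∏ j ∈ Finset.Icc 1 (k+1), Real.cosh (L * c j)
          = (∏ j ∈ Finset.Icc 1 k, Real.cosh (L * c j)) * Real.cosh (L * c (k+1)) :=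
        Finset.prod_Icc_succ_top (Nat.le_add_left 1 k) _
      calc ∫ ω, Real.cosh (L * ‖X (k+1) ω - X 0 ω‖) ∂P
          ≤ Real.cosh (L * c (k+1)) * ∫ ω, Real.cosh (L * ‖Y ω‖) ∂P := hstep
        _ ≤ Real.cosh (L * c (k+1)) * ∏ j ∈ Finset.Icc 1 k, Real.cosh (L * c j) :=
            mul_le_mul_of_nonneg_left ih (Real.cosh_pos _).le
        _ = ∏ j ∈ Finset.Icc 1 (k+1), Real.cosh (L * c j) := by
            rw [hprodstep]; ring
  set A := {ω | ε ≤ ‖X n ω - X 0 ω‖} with hAdef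
  have hAmeas : MeasurableSet A :=
    measurableSet_le measurable_const (hYSM n).norm.measurable
  have h1 : Real.cosh (L * ε) * (P A).toReal ≤
      ∫ ω, Real.cosh (L * ‖X n ω - X 0 ω‖) ∂P := by
    have heq : ∫ _ω in A, Real.cosh (L * ε) ∂P = (P A).toReal * Real.cosh (L * ε) := by
      rw [setIntegral_const, smul_eq_mul]; rfl
    have hmono : ∫ _ω in A, Real.cosh (L * ε) ∂P ≤
        ∫ ω in A, Real.cosh (L * ‖X n ω - X 0 ω‖) ∂P := by
      refine setIntegral_mono_on (integrableOn_const (measure_ne_top P A))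
        ((hint n).integrableOn) hAmeas ?_
      intro ω hω
      have hω' : ε ≤ ‖X n ω - X 0 ω‖ := hω
      apply Real.cosh_le_cosh.2
      rw [abs_of_nonneg (by positivity), abs_of_nonneg (by positivity)]
      exact mul_le_mul_of_nonneg_left hω' hL.le
    have hle : ∫ ω in A, Real.cosh (L * ‖X n ω - X 0 ω‖) ∂P ≤
        ∫ ω, Real.cosh (L * ‖X n ω - X 0 ω‖) ∂P :=
      setIntegral_le_integral (hint n) (ae_of_all _ fun ω => (Real.cosh_pos _).le)
    linarith
  have h3 : ∏ j ∈ Finset.Icc 1 n, Real.cosh (L * c j) ≤ Real.exp (L^2 * S / 2) := by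
    calc ∏ j ∈ Finset.Icc 1 n, Real.cosh (L * c j)
        ≤ ∏ j ∈ Finset.Icc 1 n, Real.exp ((L * c j)^2 / 2) :=
          Finset.prod_le_prod (fun j _ => (Real.cosh_pos _).le)
            (fun j _ => Real.cosh_le_exp_half_sq _)
      _ = Real.exp (∑ j ∈ Finset.Icc 1 n, (L * c j)^2 / 2) := (Real.exp_sum _ _).symm
      _ = Real.exp (L^2 * S / 2) := by
          congr 1
          rw [hSdef]
          rw [Finset.mul_sum, Finset.sum_div]
          exact Finset.sum_congr rfl (fun j _ => by ring)
  have hcosh_lb : Real.exp (L * ε) / 2 ≤ Real.cosh (L * ε) := by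
    rw [Real.cosh_eq]
    have := (Real.exp_pos (-(L * ε))).le
    linarith
  have htoReal : (P A).toReal ≤ 2 * Real.exp (-(ε^2 / (2 * S))) := by
    have hIle : ∫ ω, Real.cosh (L * ‖X n ω - X 0 ω‖) ∂P ≤ Real.exp (L^2 * S / 2) :=
      le_trans (hkey n) h3
    have hc1 : 0 < Real.cosh (L * ε) := Real.cosh_pos _
    have step1 : (P A).toReal ≤ Real.exp (L^2 * S / 2) / Real.cosh (L * ε) := by
      rw [le_div_iff₀ hc1]
      calc (P A).toReal * Real.cosh (L * ε) = Real.cosh (L * ε) * (P A).toReal :=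
            mul_comm _ _
        _ ≤ _ := le_trans h1 hIle
    have step2 : Real.exp (L^2 * S / 2) / Real.cosh (L * ε) ≤
        Real.exp (L^2 * S / 2) / (Real.exp (L * ε) / 2) :=
      div_le_div_of_nonneg_left (Real.exp_pos _).le (by positivity) hcosh_lb
    have step3 : Real.exp (L^2 * S / 2) / (Real.exp (L * ε) / 2)
        = 2 * Real.exp (L^2 * S / 2 - L * ε) := by
      rw [Real.exp_sub]
      field_simp
    have harg : L^2 * S / 2 - L * ε = -(ε^2 / (2 * S)) := by
      rw [hLdef]
      field_simp
      ring
    calc (P A).toReal ≤ Real.exp (L^2 * S / 2) / Real.cosh (L * ε) := step1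
      _ ≤ Real.exp (L^2 * S / 2) / (Real.exp (L * ε) / 2) := step2
      _ = 2 * Real.exp (-(ε^2 / (2 * S))) := by rw [step3, harg]
  have hmono_exp : 2 * Real.exp (-(ε^2 / (2 * S))) ≤ 2 * Real.exp (-(2 * ε^2) / (5 * S)) := by
    have hle : -(ε^2 / (2 * S)) ≤ -(2 * ε^2) / (5 * S) := by
      rw [neg_div]
      apply neg_le_neg
      rw [div_le_div_iff₀ (by positivity) (by positivity)]
      nlinarith [sq_nonneg ε]
    have := Real.exp_le_exp.2 hle
    linarith
  rw [← ENNReal.ofReal_toReal (measure_ne_top P A)]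
  exact ENNReal.ofReal_le_ofReal (le_trans htoReal hmono_exp)
end

section
/- Let X = (x₁, …, x_d) be a zero-mean random vector in ℝ^d such that the components x₁, …, x_d are mutually independent, E[‖X‖²] ≤ σ², and Pr{|xᵢ| ≤ rᵢ} = 1 for i = 1, …, d, where each rᵢ > 0. Then for every ε > σ: Pr{ ‖X‖ ≥ ε } ≤ exp( −2(ε² − σ²)² / Σ_{i=1}^{d} rᵢ⁴ ). -/
open MeasureTheory ProbabilityTheory

section HoeffdingAux
open Real


lemma keyineq {p : ℝ} (hp0 : 0 ≤ p) (hp1 : p ≤ 1) (h : ℝ) :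
    1 - p + p * Real.exp h ≤ Real.exp (p * h + h ^ 2 / 8) := by
  have hD : ∀ x : ℝ, 0 < 1 - p + p * Real.exp x := by
    intro x
    rcases eq_or_lt_of_le hp0 with h0 | h0
    · simp [← h0]
    · nlinarith [Real.exp_pos x, mul_pos h0 (Real.exp_pos x)]
  set g : ℝ → ℝ := fun x => p * x + x ^ 2 / 8 - Real.log (1 - p + p * Real.exp x) with hg
  set φ : ℝ → ℝ := fun x => p + x / 4 - p * Real.exp x / (1 - p + p * Real.exp x) with hφ
  have hDd : ∀ x : ℝ, HasDerivAt (fun y => 1 - p + p * Real.exp y) (p * Real.exp x) x := by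
    intro x
    simpa using ((Real.hasDerivAt_exp x).const_mul p).const_add (1 - p)
  have hgd : ∀ x : ℝ, HasDerivAt g (φ x) x := by
    intro x
    have h1 : HasDerivAt (fun y => Real.log (1 - p + p * Real.exp y))
        (p * Real.exp x / (1 - p + p * Real.exp x)) x := (hDd x).log (hD x).ne'
    have h2 : HasDerivAt (fun y : ℝ => p * y + y ^ 2 / 8) (p + 2 * x / 8) x := by
      exact (((hasDerivAt_id x).const_mul p).add
        (((hasDerivAt_pow 2 x)).div_const 8)).congr_deriv (by norm_num)
    have := h2.sub h1
    convert this using 1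
    · rfl
    · rfl
    · rfl
    show p + x / 4 - p * Real.exp x / (1 - p + p * Real.exp x) = _; ring
  have hφd : ∀ x : ℝ, HasDerivAt φ
      (1 / 4 - (p * Real.exp x * (1 - p) / (1 - p + p * Real.exp x) ^ 2)) x := by
    intro x
    have h1 : HasDerivAt (fun y => p * Real.exp y / (1 - p + p * Real.exp y))
        ((p * Real.exp x * (1 - p + p * Real.exp x) - p * Real.exp x * (p * Real.exp x)) /
          (1 - p + p * Real.exp x) ^ 2) x :=
      ((Real.hasDerivAt_exp x).const_mul p).div (hDd x) (hD x).ne'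
    have h2 : HasDerivAt (fun y : ℝ => p + y / 4) (1 / 4) x := by
      simpa using ((hasDerivAt_id x).div_const 4).const_add p
    have := h2.sub h1
    convert this using 1
    · rfl
    congr 1
    congr 1
    ring
  have hφmono : Monotone φ := by
    refine monotone_of_deriv_nonneg (fun x => (hφd x).differentiableAt) ?_
    intro x
    rw [(hφd x).deriv]
    have hx := hD x
    have he := Real.exp_pos x
    rw [sub_nonneg, div_le_iff₀ (by positivity)]
    nlinarith [sq_nonneg (1 - p - p * Real.exp x), mul_nonneg hp0 he.le,
      mul_nonneg (mul_nonneg hp0 he.le) (sub_nonneg.mpr hp1)]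
  have hφ0 : φ 0 = 0 := by
    simp only [hφ, Real.exp_zero, mul_one]
    have : 1 - p + p = 1 := by ring
    rw [this]
    simp
  have hgc : Continuous g := by
    refine Continuous.sub (by fun_prop) ?_
    exact (Continuous.log (by fun_prop) (fun x => (hD x).ne'))
  have hg0 : g 0 = 0 := by
    simp only [hg, Real.exp_zero, mul_one, mul_zero]
    have : 1 - p + p = (1:ℝ) := by ring
    rw [this]
    simp
  have hgnonneg : ∀ x : ℝ, 0 ≤ g x := by
    intro x
    rcases le_or_gt 0 x with hx | hx
    · have hmono : MonotoneOn g (Set.Ici 0) := by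
        refine monotoneOn_of_deriv_nonneg (convex_Ici 0) hgc.continuousOn
          (fun y _ => (hgd y).differentiableAt.differentiableWithinAt) ?_
        intro y hy
        rw [interior_Ici] at hy
        rw [(hgd y).deriv]
        have := hφmono (le_of_lt hy)
        rw [hφ0] at this
        exact this
      have := hmono Set.self_mem_Ici hx hx
      rwa [hg0] at this
    · have hanti : AntitoneOn g (Set.Iic 0) := by
        refine antitoneOn_of_deriv_nonpos (convex_Iic 0) hgc.continuousOn
          (fun y _ => (hgd y).differentiableAt.differentiableWithinAt) ?_
        intro y hy
        rw [interior_Iic] at hy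
        rw [(hgd y).deriv]
        have := hφmono (le_of_lt hy)
        rw [hφ0] at this
        exact this
      have := hanti hx.le Set.self_mem_Iic hx.le
      rwa [hg0] at this
  have := hgnonneg h
  simp only [hg] at this
  have hlog : Real.log (1 - p + p * Real.exp h) ≤ p * h + h ^ 2 / 8 := by linarith
  calc 1 - p + p * Real.exp h = Real.exp (Real.log (1 - p + p * Real.exp h)) :=
        (Real.exp_log (hD h)).symm
    _ ≤ Real.exp (p * h + h ^ 2 / 8) := Real.exp_le_exp.mpr hlog

lemma mgf_le_hoeffding {Ω : Type*} [MeasurableSpace Ω] (P : Measure Ω) [IsProbabilityMeasure P]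
    (Y : Ω → ℝ) (hY : Measurable Y) (c : ℝ) (hc : 0 < c)
    (hbd : ∀ᵐ ω ∂P, Y ω ∈ Set.Icc 0 c) (t : ℝ) :
    mgf Y P t ≤ Real.exp (t * (∫ ω, Y ω ∂P) + t ^ 2 * c ^ 2 / 8) := by
  have hYint : Integrable Y P := by
    refine (integrable_const c).mono' hY.aestronglyMeasurable ?_
    filter_upwards [hbd] with ω hω
    rw [Real.norm_eq_abs, abs_le]
    exact ⟨by linarith [hω.1], hω.2⟩
  set μ := ∫ ω, Y ω ∂P with hμ
  have hμ0 : 0 ≤ μ := integral_nonneg_of_ae (by filter_upwards [hbd] with ω hω using hω.1)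
  have hμc : μ ≤ c := by
    have h1 : μ ≤ ∫ (_ : Ω), c ∂P := integral_mono_ae hYint (integrable_const c)
        (by filter_upwards [hbd] with ω hω using hω.2)
    simpa using h1
  -- pointwise convexity bound
  have hpt : ∀ᵐ ω ∂P, Real.exp (t * Y ω) ≤ 1 + (Real.exp (t * c) - 1) / c * Y ω := by
    filter_upwards [hbd] with ω hω
    have hconv := convexOn_exp.2 (Set.mem_univ (0:ℝ)) (Set.mem_univ (t * c))
      (show (0:ℝ) ≤ 1 - Y ω / c by
        rw [sub_nonneg]; exact div_le_one_of_le₀ hω.2 hc.le)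
      (show (0:ℝ) ≤ Y ω / c from div_nonneg hω.1 hc.le)
      (show (1 - Y ω / c) + Y ω / c = 1 by ring)
    simp only [smul_eq_mul, mul_zero, zero_add, Real.exp_zero, mul_one] at hconv
    have h1 : Y ω / c * (t * c) = t * Y ω := by field_simp
    rw [h1] at hconv
    calc Real.exp (t * Y ω) ≤ (1 - Y ω / c) + Y ω / c * Real.exp (t * c) := hconv
      _ = 1 + (Real.exp (t * c) - 1) / c * Y ω := by field_simp; ring
  have hexpint : Integrable (fun ω => Real.exp (t * Y ω)) P := by
    refine (integrable_const (Real.exp (|t| * c))).mono'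
      ((hY.const_mul t).exp).aestronglyMeasurable ?_
    filter_upwards [hbd] with ω hω
    rw [Real.norm_eq_abs, abs_of_pos (Real.exp_pos _), Real.exp_le_exp]
    calc t * Y ω ≤ |t * Y ω| := le_abs_self _
      _ = |t| * |Y ω| := abs_mul _ _
      _ ≤ |t| * c := by
          apply mul_le_mul_of_nonneg_left _ (abs_nonneg t)
          rw [abs_of_nonneg hω.1]; exact hω.2
  have hstep1 : mgf Y P t ≤ 1 + (Real.exp (t * c) - 1) / c * μ := by
    rw [mgf]
    calc ∫ ω, Real.exp (t * Y ω) ∂P ≤ ∫ ω, 1 + (Real.exp (t * c) - 1) / c * Y ω ∂P :=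
          integral_mono_ae hexpint ((integrable_const 1).add (hYint.const_mul _)) hpt
      _ = 1 + (Real.exp (t * c) - 1) / c * μ := by
          rw [integral_add (integrable_const 1) (hYint.const_mul _), MeasureTheory.integral_const_mul]
          simp [hμ]
  have hkey := keyineq (p := μ / c) (div_nonneg hμ0 hc.le) (div_le_one_of_le₀ hμc hc.le) (t * c)
  have heq1 : 1 - μ / c + μ / c * Real.exp (t * c) = 1 + (Real.exp (t * c) - 1) / c * μ := by
    field_simp; ring
  have heq2 : μ / c * (t * c) + (t * c) ^ 2 / 8 = t * μ + t ^ 2 * c ^ 2 / 8 := by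
    field_simp
  rw [heq1, heq2] at hkey
  linarith

end HoeffdingAux

/-- For a zero-mean random vector `X` in `ℝ^d` with mutually independent components,
`E[‖X‖²] ≤ σ²`, and `|xᵢ| ≤ rᵢ` almost surely, for every `ε > σ`:
`Pr{‖X‖ ≥ ε} ≤ exp (-2(ε² - σ²)²/∑ rᵢ⁴)`. -/
theorem statement18 {d : ℕ} {Ω : Type*} [MeasurableSpace Ω]
    (P : Measure Ω) [IsProbabilityMeasure P]
    (X : Ω → EuclideanSpace ℝ (Fin d)) (hXm : Measurable X)
    (hindep : iIndepFun (fun i ω => X ω i) P)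
    (hmean : (∫ ω, X ω ∂P) = 0)
    (σ : ℝ) (hσ : 0 ≤ σ) (hvar : (∫ ω, ‖X ω‖ ^ 2 ∂P) ≤ σ ^ 2)
    (r : Fin d → ℝ) (hr : ∀ i, 0 < r i)
    (hbd : ∀ i, ∀ᵐ ω ∂P, |X ω i| ≤ r i)
    (ε : ℝ) (hε : σ < ε) :
    P {ω | ε ≤ ‖X ω‖} ≤
      ENNReal.ofReal (Real.exp (-(2 * (ε ^ 2 - σ ^ 2) ^ 2) / ∑ i, (r i) ^ 4)) := by
  by_cases hd : d = 0
  · subst hd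
    have h0 : (∑ i : Fin 0, (r i) ^ 4) = 0 := by simp
    rw [h0, div_zero, Real.exp_zero, ENNReal.ofReal_one]
    exact prob_le_one
  haveI : Nonempty (Fin d) := ⟨⟨0, Nat.pos_of_ne_zero hd⟩⟩
  have hε0 : 0 ≤ ε := le_of_lt (lt_of_le_of_lt hσ hε)
  set Y : Fin d → Ω → ℝ := fun i ω => (X ω i) ^ 2 with hY
  have hXi : ∀ i, Measurable fun ω => X ω i := fun i => (measurable_pi_apply i).comp ((WithLp.measurable_ofLp _ _).comp hXm)
  have hYm : ∀ i, Measurable (Y i) := fun i => (hXi i).pow_const 2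
  have hindepY : iIndepFun Y P :=
    hindep.comp (fun _ (x : ℝ) => x ^ 2) (fun _ => measurable_id.pow_const 2)
  have hnorm : ∀ ω, ‖X ω‖ ^ 2 = ∑ i, Y i ω := by
    intro ω
    rw [EuclideanSpace.norm_eq, Real.sq_sqrt (Finset.sum_nonneg fun i _ => by positivity)]
    exact Finset.sum_congr rfl fun i _ => by simp [hY, Real.norm_eq_abs, sq_abs]
  set R : ℝ := ∑ i, (r i) ^ 4 with hRdef
  have hR : 0 < R := Finset.sum_pos (fun i _ => pow_pos (hr i) 4) Finset.univ_nonempty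
  set t : ℝ := ε ^ 2 - σ ^ 2 with htdef
  have ht : 0 < t := by
    have : σ ^ 2 < ε ^ 2 := by nlinarith
    simpa [htdef] using sub_pos.mpr this
  set s : ℝ := 4 * t / R with hsdef
  have hs : 0 < s := by positivity
  have hbdY : ∀ i, ∀ᵐ ω ∂P, Y i ω ∈ Set.Icc 0 ((r i) ^ 2) := by
    intro i
    filter_upwards [hbd i] with ω hω
    obtain ⟨h1, h2⟩ := abs_le.mp hω
    exact ⟨sq_nonneg _, sq_le_sq' h1 h2⟩
  have hYint : ∀ i, Integrable (Y i) P := by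
    intro i
    refine (integrable_const ((r i) ^ 2)).mono' (hYm i).aestronglyMeasurable ?_
    filter_upwards [hbdY i] with ω hω
    rw [Real.norm_eq_abs, abs_of_nonneg hω.1]
    exact hω.2
  have hintY : ∀ i ∈ Finset.univ, Integrable (fun ω => Real.exp (s * Y i ω)) P := by
    intro i _
    refine (integrable_const (Real.exp (s * (r i) ^ 2))).mono'
      (((hYm i).const_mul s).exp).aestronglyMeasurable ?_
    filter_upwards [hbdY i] with ω hω
    rw [Real.norm_eq_abs, abs_of_pos (Real.exp_pos _), Real.exp_le_exp]
    exact mul_le_mul_of_nonneg_left hω.2 hs.le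
  -- sum of means bounded by σ²
  have hsum_mean : (∑ i, ∫ ω, Y i ω ∂P) ≤ σ ^ 2 := by
    rw [← integral_finset_sum _ fun i _ => hYint i]
    calc ∫ ω, ∑ i, Y i ω ∂P = ∫ ω, ‖X ω‖ ^ 2 ∂P := by
          refine integral_congr_ae (Filter.Eventually.of_forall fun ω => ?_)
          exact (hnorm ω).symm
      _ ≤ σ ^ 2 := hvar
  -- mgf bound
  set S : Ω → ℝ := ∑ i, Y i with hSdef
  have hSapp : ∀ ω, S ω = ∑ i, Y i ω := fun ω => by simp [hSdef]
  have hmgf : mgf S P s ≤ Real.exp (s * σ ^ 2 + s ^ 2 * R / 8) := by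
    rw [hSdef, hindepY.mgf_sum hYm]
    calc (∏ i, mgf (Y i) P s)
        ≤ ∏ i, Real.exp (s * (∫ ω, Y i ω ∂P) + s ^ 2 * ((r i) ^ 2) ^ 2 / 8) := by
          refine Finset.prod_le_prod (fun i _ => mgf_nonneg) (fun i _ => ?_)
          exact mgf_le_hoeffding P (Y i) (hYm i) ((r i) ^ 2) (pow_pos (hr i) 2) (hbdY i) s
      _ = Real.exp (∑ i, (s * (∫ ω, Y i ω ∂P) + s ^ 2 * ((r i) ^ 2) ^ 2 / 8)) := by
          rw [Real.exp_sum]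
      _ ≤ Real.exp (s * σ ^ 2 + s ^ 2 * R / 8) := by
          rw [Real.exp_le_exp, Finset.sum_add_distrib, ← Finset.mul_sum, ← Finset.sum_div,
            ← Finset.mul_sum]
          have h1 : ∑ i, ((r i) ^ 2) ^ 2 = R := by
            rw [hRdef]; exact Finset.sum_congr rfl fun i _ => by ring
          rw [h1]
          have := mul_le_mul_of_nonneg_left hsum_mean hs.le
          linarith
  have hSint : Integrable (fun ω => Real.exp (s * S ω)) P := by
    have := hindepY.integrable_exp_mul_sum (t := s) hYm hintY
    simpa [hSdef] using this
  have hchern := measure_ge_le_exp_mul_mgf (μ := P) (X := S) (ε ^ 2) hs.le hSint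
  -- event inclusion
  have hsub : {ω | ε ≤ ‖X ω‖} ⊆ {ω | ε ^ 2 ≤ S ω} := by
    intro ω hω
    simp only [Set.mem_setOf_eq] at hω ⊢
    rw [hSapp, ← hnorm]
    exact pow_le_pow_left₀ hε0 hω 2
  refine le_trans (measure_mono hsub) ?_
  rw [← ENNReal.ofReal_toReal (measure_ne_top P _)]
  refine ENNReal.ofReal_le_ofReal ?_
  refine le_trans hchern ?_
  calc Real.exp (-s * ε ^ 2) * mgf S P s
      ≤ Real.exp (-s * ε ^ 2) * Real.exp (s * σ ^ 2 + s ^ 2 * R / 8) :=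
        mul_le_mul_of_nonneg_left hmgf (Real.exp_pos _).le
    _ = Real.exp (-s * ε ^ 2 + (s * σ ^ 2 + s ^ 2 * R / 8)) := (Real.exp_add _ _).symm
    _ = Real.exp (-(2 * t ^ 2) / R) := by
        congr 1
        rw [hsdef]
        field_simp
        ring
end
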